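/- arXiv:1309.2401 — 3 statements merged into one kernel-verified Lean document; each statement's English description precedes it below -/
import Mathlib

section
/- If a separable Hausdorff topological space X contains a cocountable subset homeomorphic to the ordinal space [0, ω₁], then X admits no separately continuous mean operation, i.e., no separately continuous map μ : X × X → X satisfying μ(x,x) = x and μ(x,y) = μ(y,x) for all x, y ∈ X. -/
open Ordinal Topology

/-- `f` is separately continuous as a function of two variables. -/
def SepCts {X Y : Type*} [TopologicalSpace X] [TopologicalSpace Y]
    (f : X → X → Y) : Prop :=
  ∀ a : X, Continuous (fun x => f a x) ∧ Continuous (fun x => f x a)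

section NoMeanHelpers

open Set Filter Cardinal

noncomputable section
namespace NoMean
universe u v


lemma kappa_limit : Order.IsSuccLimit (ω_ 1 : Ordinal.{u}) := by
  rw [← ord_aleph]; exact Cardinal.isSuccLimit_ord (aleph0_le_aleph 1)

lemma lt_kappa_iff {β : Ordinal.{u}} : β < ω_ 1 ↔ β.card ≤ ℵ₀ := by
  rw [← ord_aleph, Cardinal.lt_ord, ← Cardinal.succ_aleph0, Order.lt_succ_iff]

lemma countable_Iic {β : Ordinal.{u}} (h : β < ω_ 1) : (Set.Iic β).Countable := by
  have hlt : Order.succ β < ω_ 1 := kappa_limit.succ_lt h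
  have h2 : (Set.Iio (Order.succ β)).Countable := by
    rw [← le_aleph0_iff_set_countable, Ordinal.mk_Iio_ordinal, ← Cardinal.lift_aleph0.{u+1,u},
      Cardinal.lift_le]
    exact lt_kappa_iff.mp hlt
  rwa [Order.Iio_succ] at h2

lemma countable_bounded (s : Set Ordinal.{u}) (hs : s.Countable) (h : ∀ x ∈ s, x < ω_ 1) :
    ∃ β, β < ω_ 1 ∧ ∀ x ∈ s, x ≤ β := by
  rcases s.eq_empty_or_nonempty with rfl | hne
  · exact ⟨0, omega_pos 1, by simp⟩
  · obtain ⟨f, rfl⟩ := hs.exists_eq_range hne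
    refine ⟨iSup f, ?_, fun x hx => ?_⟩
    · rw [← ord_aleph]
      rw [ord_aleph]; exact Ordinal.iSup_lt_omega_one (fun n => h _ ⟨n, rfl⟩)
    · obtain ⟨n, rfl⟩ := hx; exact Ordinal.le_iSup f n

lemma unbounded_of_uncountable {s : Set Ordinal.{u}} (hunc : ¬ s.Countable) :
    ∀ β < ω_ 1, ∃ γ ∈ s, β < γ := by
  intro β hβ
  by_contra hcon
  push_neg at hcon
  exact hunc (((countable_Iic hβ).mono (fun x hx => hcon x hx)))

/-- club subsets of `ω₁` -/
def IsClub (K : Set Ordinal.{u}) : Prop :=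
  (∀ γ ∈ K, γ < ω_ 1) ∧ (∀ β < ω_ 1, ∃ γ ∈ K, β < γ) ∧
    ∀ δ < ω_ 1, 0 < δ → (∀ β < δ, (K ∩ Set.Ioo β δ).Nonempty) → δ ∈ K

lemma clubs_inter {ι : Type v} [Countable ι] {K : ι → Set Ordinal.{u}}
    (hK : ∀ i, IsClub (K i)) :
    ∀ β < ω_ 1, ∃ γ, β < γ ∧ γ < ω_ 1 ∧ ∀ i, γ ∈ K i := by
  intro β hβ
  haveI : Encodable ι := Encodable.ofCountable ι
  -- picking function
  have hpick : ∀ i : ι, ∀ b < ω_ 1, ∃ γ ∈ K i, b < γ := fun i => (hK i).2.1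
  set F : ι → Ordinal.{u} → Ordinal.{u} := fun i b =>
    if h : b < ω_ 1 then Classical.choose (hpick i b h) else 0 with hF
  have hFspec : ∀ i b, b < ω_ 1 → F i b ∈ K i ∧ b < F i b := by
    intro i b hb
    have := Classical.choose_spec (hpick i b hb)
    simp only [hF, dif_pos hb]
    exact ⟨this.1, this.2⟩
  -- recursion
  set g : ℕ → Ordinal.{u} := fun k => Nat.rec (β + 1)
    (fun k gk => max (gk + 1)
      (match Encodable.decode₂ ι k.unpair.1 with
        | some i => F i gk
        | none => 0)) k with hg
  have hglt : ∀ k, g k < ω_ 1 := by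
    intro k
    induction k with
    | zero => exact kappa_limit.succ_lt hβ
    | succ k ih =>
      refine max_lt (kappa_limit.succ_lt ih) ?_
      cases hdec : Encodable.decode₂ ι k.unpair.1 with
      | none => simpa [hg, hdec] using omega_pos 1
      | some i => exact (hK i).1 _ (hFspec i (g k) ih).1
  have hsucc1 : ∀ x : Ordinal.{u}, x < x + 1 := fun x => by
    rw [Ordinal.add_one_eq_succ]; exact Order.lt_succ x
  have hgmono : ∀ k, g k < g (k + 1) := by
    intro k
    calc g k < g k + 1 := hsucc1 (g k)
    _ ≤ g (k+1) := le_max_left _ _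
  have hgm : StrictMono g := strictMono_nat_of_lt_succ hgmono
  set γ := ⨆ k, g k with hγ
  have hγlt : γ < ω_ 1 := by
    rw [← ord_aleph]
    rw [ord_aleph]; exact Ordinal.iSup_lt_omega_one (fun n => hglt n)
  have hle : ∀ k, g k ≤ γ := fun k => Ordinal.le_iSup g k
  have hβγ : β < γ := lt_of_lt_of_le (hsucc1 β) (hle 0)
  refine ⟨γ, hβγ, hγlt, fun i => ?_⟩
  refine (hK i).2.2 γ hγlt (lt_of_le_of_lt (zero_le : (0 : Ordinal) ≤ β) hβγ) ?_
  intro b hb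
  obtain ⟨k, hk⟩ := Ordinal.lt_iSup_iff.mp hb
  set k' := Nat.pair (Encodable.encode i) k with hk'
  have hkk' : k ≤ k' := Nat.right_le_pair _ _
  have hgk' : g k ≤ g k' := hgm.monotone hkk'
  have hdec : Encodable.decode₂ ι k'.unpair.1 = some i := by
    rw [hk', Nat.unpair_pair]; exact Encodable.decode₂_encode i
  have hx : F i (g k') ∈ K i ∧ g k' < F i (g k') := hFspec i (g k') (hglt k')
  have hred : g (k'+1) = max (g k' + 1)
      (match Encodable.decode₂ ι (Nat.unpair k').1 with
        | some j => F j (g k') | none => 0) := rfl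
  rw [hdec] at hred
  have hxle : F i (g k') ≤ g (k'+1) := hred ▸ le_max_right _ _
  exact ⟨F i (g k'), hx.1, lt_of_lt_of_le hk (hgk'.trans hx.2.le),
    lt_of_le_of_lt hxle ((hgmono (k'+1)).trans_le (hle (k'+2)))⟩



lemma isLimit_of_acc {δ : Ordinal.{u}} {s : Set Ordinal.{u}} (hδ0 : 0 < δ)
    (hacc : ∀ β < δ, (s ∩ Set.Ioo β δ).Nonempty) : Order.IsSuccLimit δ := by
  refine Ordinal.isSuccLimit_iff.mpr ⟨hδ0.ne', Order.isSuccPrelimit_iff_succ_lt.mpr fun a ha => ?_⟩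
  obtain ⟨γ, _, hγ⟩ := hacc a ha
  exact lt_of_le_of_lt (Order.succ_le_of_lt hγ.1) hγ.2

lemma mem_closure_ord {δ : Ordinal.{u}} {s : Set Ordinal.{u}} (hδ0 : 0 < δ)
    (hacc : ∀ β < δ, (s ∩ Set.Ioo β δ).Nonempty) : δ ∈ closure s := by
  rw [mem_closure_iff]
  intro o ho hδo
  obtain ⟨a, ha, hao⟩ := (Ordinal.isOpen_iff.mp ho) δ hδo (isLimit_of_acc hδ0 hacc)
  obtain ⟨γ, hγs, hγ⟩ := hacc a ha
  exact ⟨γ, hao hγ, hγs⟩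

lemma mem_closure_ord_top {s : Set Ordinal.{u}}
    (hacc : ∀ β < (ω_ 1 : Ordinal.{u}), (s ∩ Set.Ioo β (ω_ 1)).Nonempty) :
    (ω_ 1 : Ordinal.{u}) ∈ closure s := by
  rw [mem_closure_iff]
  intro o ho hδo
  obtain ⟨a, ha, hao⟩ := (Ordinal.isOpen_iff.mp ho) _ hδo kappa_limit
  obtain ⟨γ, hγs, hγ⟩ := hacc a ha
  exact ⟨γ, hao hγ, hγs⟩

/-- membership in closed subsets of `Iic ω₁` from accumulation -/
lemma mem_of_closed {s : Set (Set.Iic (ω_ 1 : Ordinal.{u}))} (hs : IsClosed s)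
    {δ : Ordinal.{u}} (hδ : δ ≤ ω_ 1) (h0 : 0 < δ)
    (hacc : ∀ β < δ, ((Subtype.val '' s) ∩ Set.Ioo β δ).Nonempty) : ⟨δ, hδ⟩ ∈ s := by
  rw [← hs.closure_eq]
  rw [closure_subtype]
  exact mem_closure_ord h0 hacc


variable {X : Type v} [TopologicalSpace X] [T2Space X]

abbrev topI : ↥(Set.Iic (ω_ 1 : Ordinal.{u})) := ⟨ω_ 1, Set.self_mem_Iic⟩

/-- fibers of a continuous map on `Iic ω₁` -/
def Fib (g : ↥(Set.Iic (ω_ 1 : Ordinal.{u})) → X) (x : X) : Set Ordinal.{u} :=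
  {γ | ∃ h : γ < ω_ 1, g ⟨γ, h.le⟩ = x}

lemma fib_top {g : ↥(Set.Iic (ω_ 1 : Ordinal.{u})) → X} (hg : Continuous g) {x : X}
    (hunb : ∀ β < (ω_ 1 : Ordinal.{u}), ∃ γ ∈ Fib g x, β < γ) : g topI = x := by
  show g ⟨ω_ 1, Set.self_mem_Iic⟩ = x
  have : (⟨ω_ 1, Set.self_mem_Iic⟩ : ↥(Set.Iic (ω_ 1 : Ordinal.{u}))) ∈ g ⁻¹' {x} := by
    refine mem_of_closed (IsClosed.preimage hg isClosed_singleton) _ (omega_pos 1) ?_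
    intro β hβ
    obtain ⟨γ, ⟨hγκ, hγx⟩, hβγ⟩ := hunb β hβ
    exact ⟨γ, ⟨⟨⟨γ, hγκ.le⟩, hγx, rfl⟩, hβγ, hγκ⟩⟩
  exact this

lemma fib_countable {g : ↥(Set.Iic (ω_ 1 : Ordinal.{u})) → X} (hg : Continuous g)
    (hS : ∃ β < (ω_ 1 : Ordinal.{u}), ∀ γ ∈ Fib g (g topI), γ ≤ β) (x : X) :
    (Fib g x).Countable := by
  by_cases hx : ∀ β < (ω_ 1 : Ordinal.{u}), ∃ γ ∈ Fib g x, β < γ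
  · obtain ⟨β, hβκ, hβ⟩ := hS
    rw [fib_top hg hx] at hβ
    exact (countable_Iic hβκ).mono hβ
  · push_neg at hx
    obtain ⟨β, hβκ, hβ⟩ := hx
    exact (countable_Iic hβκ).mono (fun γ hγ => (hβ γ hγ))

/-- equalizer sets are club-closed -/
lemma equalizer_closed {g1 g2 : ↥(Set.Iic (ω_ 1 : Ordinal.{u})) → X}
    (h1 : Continuous g1) (h2 : Continuous g2) :
    ∀ δ < (ω_ 1 : Ordinal.{u}), 0 < δ →
      (∀ β < δ, ({γ | ∃ h : γ < ω_ 1, g1 ⟨γ, h.le⟩ = g2 ⟨γ, h.le⟩} ∩ Set.Ioo β δ).Nonempty) →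
      ∃ h : δ < ω_ 1, g1 ⟨δ, h.le⟩ = g2 ⟨δ, h.le⟩ := by
  intro δ hδκ hδ0 hacc
  refine ⟨hδκ, ?_⟩
  have : (⟨δ, hδκ.le⟩ : ↥(Set.Iic (ω_ 1 : Ordinal.{u}))) ∈ {z | g1 z = g2 z} := by
    refine mem_of_closed (isClosed_eq h1 h2) _ hδ0 ?_
    intro β hβ
    obtain ⟨γ, ⟨hγκ, hγeq⟩, hγI⟩ := hacc β hβ
    exact ⟨γ, ⟨⟨γ, hγκ.le⟩, hγeq, rfl⟩, hγI⟩
  exact this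

theorem dichotomy {A : Set X} (hAcc : (Aᶜ).Countable)
    {E : ↥(Set.Iic (ω_ 1 : Ordinal.{u})) → X} (hE : Topology.IsEmbedding E)
    (hrange : Set.range E = A)
    {g : ↥(Set.Iic (ω_ 1 : Ordinal.{u})) → X} (hg : Continuous g) :
    ∃ K : Set Ordinal.{u}, IsClub K ∧
      ((∀ γ ∈ K, ∀ h : γ ≤ ω_ 1, g ⟨γ, h⟩ = g topI) ∨
       (∀ γ ∈ K, ∀ h : γ ≤ ω_ 1, g ⟨γ, h⟩ = E ⟨γ, h⟩)) := by
  set S : Set Ordinal.{u} := Fib g (g topI) with hSdef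
  by_cases hS : ∀ β < (ω_ 1 : Ordinal.{u}), ∃ γ ∈ S, β < γ
  · refine ⟨S, ⟨fun γ hγ => hγ.1, hS, ?_⟩, Or.inl ?_⟩
    · intro δ hδκ hδ0 hacc
      exact equalizer_closed hg continuous_const δ hδκ hδ0 hacc
    · rintro γ ⟨hγκ, hγeq⟩ h
      exact hγeq
  set T : Set Ordinal.{u} := {γ | ∃ h : γ < ω_ 1, g ⟨γ, h.le⟩ = E ⟨γ, h.le⟩} with hTdef
  by_cases hT : ∀ β < (ω_ 1 : Ordinal.{u}), ∃ γ ∈ T, β < γ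
  · refine ⟨T, ⟨fun γ hγ => hγ.1, hT, ?_⟩, Or.inr ?_⟩
    · intro δ hδκ hδ0 hacc
      exact equalizer_closed hg hE.continuous δ hδκ hδ0 hacc
    · rintro γ ⟨hγκ, hγeq⟩ h
      exact hγeq
  -- impossible case
  exfalso
  push_neg at hS hT
  obtain ⟨βS, hβSκ, hβS⟩ := hS
  obtain ⟨βT, hβTκ, hβT⟩ := hT
  have hFibCnt : ∀ x : X, (Fib g x).Countable := by
    intro x
    exact fib_countable hg ⟨βS, hβSκ, fun γ hγ => hβS γ hγ⟩ x
  -- the set of indices mapped outside A is countable, hence bounded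
  have hUcnt : {γ : Ordinal.{u} | ∃ h : γ < ω_ 1, g ⟨γ, h.le⟩ ∉ A}.Countable := by
    have hsub : {γ : Ordinal.{u} | ∃ h : γ < ω_ 1, g ⟨γ, h.le⟩ ∉ A} ⊆
        ⋃ c ∈ Aᶜ, Fib g c := by
      rintro γ ⟨hγκ, hγ⟩
      exact Set.mem_biUnion hγ ⟨hγκ, rfl⟩
    exact Set.Countable.mono hsub (hAcc.biUnion (fun c _ => hFibCnt c))
  obtain ⟨βU, hβUκ, hβU⟩ := countable_bounded _ hUcnt (fun γ hγ => hγ.1)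
  obtain ⟨βp, hβpκ, hβp⟩ := countable_bounded _ (hFibCnt (E topI)) (fun γ hγ => hγ.1)
  set β₀ : Ordinal.{u} := max βT (max βU βp) with hβ₀def
  have hβ₀κ : β₀ < ω_ 1 := by
    simp only [hβ₀def, max_lt_iff]
    exact ⟨hβTκ, hβUκ, hβpκ⟩
  -- the "collapse" function f
  set f : Ordinal.{u} → Ordinal.{u} := fun γ =>
    sInf {ζ | ∃ (hζ : ζ ≤ ω_ 1) (hγ : γ ≤ ω_ 1), g ⟨γ, hγ⟩ = E ⟨ζ, hζ⟩} with hfdef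
  have hβUβ₀ : βU ≤ β₀ := le_trans (le_max_left _ _) (le_max_right _ _)
  have hβpβ₀ : βp ≤ β₀ := le_trans (le_max_right _ _) (le_max_right _ _)
  have hβTβ₀ : βT ≤ β₀ := le_max_left _ _
  have hfspec : ∀ γ, β₀ < γ → γ < ω_ 1 →
      ∃ hf : f γ ≤ ω_ 1, ∀ h : γ ≤ ω_ 1, g ⟨γ, h⟩ = E ⟨f γ, hf⟩ := by
    intro γ hβγ hγκ
    have hgA : g ⟨γ, hγκ.le⟩ ∈ A := by
      by_contra hno
      exact absurd (hβU γ ⟨hγκ, hno⟩) (not_le.mpr (lt_of_le_of_lt hβUβ₀ hβγ))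
    rw [← hrange] at hgA
    obtain ⟨z, hz⟩ := hgA
    have hne : {ζ | ∃ (hζ : ζ ≤ ω_ 1) (hγ' : γ ≤ ω_ 1), g ⟨γ, hγ'⟩ = E ⟨ζ, hζ⟩}.Nonempty :=
      ⟨z.1, z.2, hγκ.le, hz.symm⟩
    obtain ⟨hζ, hγ', heq⟩ := csInf_mem hne
    exact ⟨hζ, fun h => heq⟩
  have hfκ : ∀ γ, β₀ < γ → γ < ω_ 1 → f γ < ω_ 1 := by
    intro γ hβγ hγκ
    obtain ⟨hf, heq⟩ := hfspec γ hβγ hγκ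
    rcases lt_or_eq_of_le hf with h | h
    · exact h
    · exfalso
      have hmem : γ ∈ Fib g (E topI) :=
        ⟨hγκ, by rw [heq hγκ.le]; congr 1; exact Subtype.ext h⟩
      exact absurd (hβp γ hmem) (not_le.mpr (lt_of_le_of_lt hβpβ₀ hβγ))
  have hfne : ∀ γ, β₀ < γ → γ < ω_ 1 → f γ ≠ γ := by
    intro γ hβγ hγκ heqγ
    obtain ⟨hf, hgeq⟩ := hfspec γ hβγ hγκ
    have hmem : γ ∈ T :=
      ⟨hγκ, by rw [hgeq hγκ.le]; congr 1; exact Subtype.ext heqγ⟩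
    exact absurd (hβT γ hmem) (not_le.mpr (lt_of_le_of_lt hβTβ₀ hβγ))
  have hZcnt : ∀ ζ, ζ < ω_ 1 → {γ | β₀ < γ ∧ γ < ω_ 1 ∧ f γ ≤ ζ}.Countable := by
    intro ζ hζκ
    have hsub : {γ | β₀ < γ ∧ γ < ω_ 1 ∧ f γ ≤ ζ} ⊆
        ⋃ ξ ∈ Set.Iic ζ, Fib g (E ⟨min ξ (ω_ 1), Set.mem_Iic.mpr (min_le_right _ _)⟩) := by
      rintro γ ⟨h1, h2, h3⟩
      obtain ⟨hf, heq⟩ := hfspec γ h1 h2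
      refine Set.mem_biUnion (show f γ ∈ Set.Iic ζ from h3) ⟨h2, ?_⟩
      rw [heq h2.le]
      congr 1
      exact Subtype.ext (min_eq_left hf).symm
    exact Set.Countable.mono hsub ((countable_Iic hζκ).biUnion (fun ξ _ => hFibCnt _))
  have hbZ : ∀ ζ : Ordinal.{u}, ∃ b, b < ω_ 1 ∧
      ∀ γ, β₀ < γ → γ < ω_ 1 → ζ < ω_ 1 → f γ ≤ ζ → γ ≤ b := by
    intro ζ
    rcases lt_or_ge ζ (ω_ 1) with h | h
    · obtain ⟨b, hb1, hb2⟩ := countable_bounded _ (hZcnt ζ h) (fun γ hγ => hγ.2.1)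
      exact ⟨b, hb1, fun γ h1 h2 _ h3 => hb2 γ ⟨h1, h2, h3⟩⟩
    · exact ⟨0, omega_pos 1, fun γ _ _ hc _ => absurd hc (not_lt.mpr h)⟩
  have hsZ : ∀ η : Ordinal.{u}, ∃ s, s < ω_ 1 ∧
      ∀ γ, β₀ < γ → γ ≤ η → η < ω_ 1 → f γ ≤ s := by
    intro η
    rcases lt_or_ge η (ω_ 1) with h | h
    · have himg : (f '' (Set.Ioc β₀ η)).Countable :=
        (((countable_Iic h).mono Set.Ioc_subset_Iic_self)).image f
      have hvals : ∀ x ∈ f '' (Set.Ioc β₀ η), x < ω_ 1 := by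
        rintro x ⟨γ, ⟨h1, h2⟩, rfl⟩
        exact hfκ γ h1 (lt_of_le_of_lt h2 h)
      obtain ⟨b, hb1, hb2⟩ := countable_bounded _ himg hvals
      exact ⟨b, hb1, fun γ h1 h2 _ => hb2 _ ⟨γ, ⟨h1, h2⟩, rfl⟩⟩
    · exact ⟨0, omega_pos 1, fun γ _ _ hc => absurd hc (not_lt.mpr h)⟩
  choose bZ hbZ1 hbZ2 using hbZ
  choose sZ hsZ1 hsZ2 using hsZ
  set d : ℕ → Ordinal.{u} := fun n => Nat.rec (β₀ + 1)
    (fun _ dn => max (dn + 1) (max (bZ dn) (sZ dn))) n with hd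
  have hsucc1 : ∀ x : Ordinal.{u}, x < x + 1 := fun x => by
    rw [Ordinal.add_one_eq_succ]; exact Order.lt_succ x
  have hkadd1 : ∀ x : Ordinal.{u}, x < ω_ 1 → x + 1 < ω_ 1 := fun x h => by
    rw [Ordinal.add_one_eq_succ]; exact kappa_limit.succ_lt h
  have hdκ : ∀ n, d n < ω_ 1 := by
    intro n
    induction n with
    | zero => exact hkadd1 _ hβ₀κ
    | succ n ih => exact max_lt (hkadd1 _ ih) (max_lt (hbZ1 (d n)) (hsZ1 (d n)))
  have hdmono : ∀ n, d n < d (n + 1) := fun n =>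
    lt_of_lt_of_le (hsucc1 (d n)) (le_max_left _ _)
  have hβ₀d : ∀ n, β₀ < d n := by
    intro n
    induction n with
    | zero => exact hsucc1 β₀
    | succ n ih => exact ih.trans (hdmono n)
  set δ : Ordinal.{u} := ⨆ n, d n with hδdef
  have hδκ : δ < ω_ 1 := by
    rw [← ord_aleph]
    rw [ord_aleph]; exact Ordinal.iSup_lt_omega_one (fun n => hdκ n)
  have hdδ : ∀ n, d n < δ := fun n => lt_of_lt_of_le (hdmono n) (Ordinal.le_iSup d (n + 1))
  have hδβ₀ : β₀ < δ := (hβ₀d 0).trans (hdδ 0)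
  have hδpos : 0 < δ := lt_of_le_of_lt (zero_le : (0 : Ordinal) ≤ β₀) hδβ₀
  have hge : δ ≤ f δ := by
    refine Ordinal.iSup_le fun n => ?_
    by_contra hcon
    push_neg at hcon
    have h1 : δ ≤ bZ (d n) := hbZ2 (d n) δ hδβ₀ hδκ (hdκ n) hcon.le
    have h2 : bZ (d n) ≤ d (n + 1) := le_trans (le_max_left _ _) (le_max_right _ _)
    exact absurd (h1.trans h2) (not_le.mpr (hdδ (n + 1)))
  set σ : Ordinal.{u} := ⨆ n, sZ (d n) with hσdef
  have hσδ : σ ≤ δ := Ordinal.iSup_le fun n =>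
    le_trans (le_trans (le_max_right _ _) (le_max_right _ _) : sZ (d n) ≤ d (n+1)) (hdδ (n+1)).le
  have hmemcl : (⟨δ, hδκ.le⟩ : ↥(Set.Iic (ω_ 1 : Ordinal.{u}))) ∈
      closure {z : ↥(Set.Iic (ω_ 1 : Ordinal.{u})) | β₀ < z.1 ∧ z.1 < δ} := by
    rw [closure_subtype]
    refine mem_closure_ord hδpos ?_
    intro β hβ
    obtain ⟨n, hn⟩ := Ordinal.lt_iSup_iff.mp hβ
    exact ⟨d n, ⟨⟨d n, (hdκ n).le⟩, ⟨hβ₀d n, hdδ n⟩, rfl⟩, hn, hdδ n⟩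
  have hmap : Set.MapsTo g {z : ↥(Set.Iic (ω_ 1 : Ordinal.{u})) | β₀ < z.1 ∧ z.1 < δ}
      (E '' {z : ↥(Set.Iic (ω_ 1 : Ordinal.{u})) | z.1 ≤ σ}) := by
    rintro z ⟨h1, h2⟩
    have hzκ : z.1 < ω_ 1 := h2.trans hδκ
    obtain ⟨hf, heq⟩ := hfspec z.1 h1 hzκ
    obtain ⟨n, hn⟩ := Ordinal.lt_iSup_iff.mp h2
    have hfz : f z.1 ≤ σ := le_trans (hsZ2 (d n) z.1 h1 hn.le (hdκ n)) (Ordinal.le_iSup (fun k => sZ (d k)) n)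
    refine ⟨⟨f z.1, hf⟩, hfz, ?_⟩
    have := heq z.2
    rw [← this]
  have hgcl := map_mem_closure hg hmemcl hmap
  obtain ⟨hfδ, heqδ⟩ := hfspec δ hδβ₀ hδκ
  have hclmem : (⟨f δ, hfδ⟩ : ↥(Set.Iic (ω_ 1 : Ordinal.{u}))) ∈
      closure {z : ↥(Set.Iic (ω_ 1 : Ordinal.{u})) | z.1 ≤ σ} := by
    rw [hE.closure_eq_preimage_closure_image]
    show E ⟨f δ, hfδ⟩ ∈ closure (E '' _)
    rw [← heqδ hδκ.le]
    exact hgcl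
  have hclosed : IsClosed {z : ↥(Set.Iic (ω_ 1 : Ordinal.{u})) | z.1 ≤ σ} :=
    (isClosed_Iic (a := σ)).preimage continuous_subtype_val
  have hfδσ : f δ ≤ σ := by
    rw [hclosed.closure_eq] at hclmem
    exact hclmem
  exact hfne δ hδβ₀ hδκ (le_antisymm (hfδσ.trans hσδ) hge)

end NoMean

end

end NoMeanHelpers

open NoMean in
theorem no_sep_cts_mean (X : Type*) [TopologicalSpace X] [T2Space X]
    [TopologicalSpace.SeparableSpace X]
    (A : Set X) (hAcc : (Aᶜ).Countable)
    (hA : Nonempty (A ≃ₜ (Set.Iic (ω_ 1) : Set Ordinal))) :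
    ¬ ∃ μ : X → X → X, SepCts μ ∧ (∀ x, μ x x = x) ∧ (∀ x y, μ x y = μ y x) := by
  rintro ⟨μ, hsep, hidem, hsymm⟩
  obtain ⟨φ⟩ := hA
  set E : ↥(Set.Iic (ω_ 1 : Ordinal)) → X := fun z => ((φ.symm z : A) : X) with hEdef
  have hEemb : Topology.IsEmbedding E :=
    Topology.IsEmbedding.subtypeVal.comp φ.symm.isEmbedding
  have hErange : Set.range E = A := by
    ext x
    constructor
    · rintro ⟨z, rfl⟩
      exact (φ.symm z).2
    · intro hx
      exact ⟨φ ⟨x, hx⟩, by simp [hEdef]⟩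
  have hEinj : Function.Injective E := hEemb.injective
  obtain ⟨D, hDcnt, hDdense⟩ := TopologicalSpace.exists_countable_dense X
  have hdich : ∀ q : X, ∃ K : Set Ordinal, NoMean.IsClub K ∧
      ((∀ γ ∈ K, ∀ h : γ ≤ ω_ 1, μ q (E ⟨γ, h⟩) = μ q (E topI)) ∨
       (∀ γ ∈ K, ∀ h : γ ≤ ω_ 1, μ q (E ⟨γ, h⟩) = E ⟨γ, h⟩)) := by
    intro q
    have hg : Continuous (fun z => μ q (E z)) := (hsep q).1.comp hEemb.continuous
    obtain ⟨K, hK, hcase⟩ := dichotomy hAcc hEemb hErange hg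
    exact ⟨K, hK, hcase⟩
  choose K hKclub hKcase using hdich
  set D' : Set X := D \ A with hD'def
  have hD'cnt : D'.Countable := hDcnt.mono Set.diff_subset
  set Sρ : Set Ordinal := {γ | ∃ h : γ < ω_ 1, E ⟨γ, h.le⟩ ∈ D} with hSρdef
  have hSρcnt : Sρ.Countable := by
    have hsub : Sρ ⊆ Subtype.val '' (E ⁻¹' D) := by
      rintro γ ⟨h, hD⟩
      exact ⟨⟨γ, h.le⟩, hD, rfl⟩
    exact Set.Countable.mono hsub ((hDcnt.preimage hEinj).image _)
  obtain ⟨ρ₀, hρ₀κ, hρ₀⟩ := countable_bounded _ hSρcnt (fun γ hγ => hγ.1)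
  -- every point of the `A`-tail is in the closure of `D'`
  have hclD' : ∀ γ, ρ₀ < γ → ∀ h : γ < ω_ 1, E ⟨γ, h.le⟩ ∈ closure D' := by
    intro γ hργ hγκ
    have hcl : E ⟨γ, hγκ.le⟩ ∈ closure D := hDdense _
    have hDsplit : D = (D ∩ A) ∪ D' := by
      rw [hD'def, Set.inter_union_diff]
    rw [hDsplit, closure_union] at hcl
    rcases hcl with hcl | hcl
    · exfalso
      have hDA : D ∩ A = E '' (E ⁻¹' D) := by
        rw [Set.image_preimage_eq_inter_range, hErange]
      rw [hDA] at hcl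
      have hmem : (⟨γ, hγκ.le⟩ : ↥(Set.Iic (ω_ 1 : Ordinal))) ∈ closure (E ⁻¹' D) := by
        rw [hEemb.closure_eq_preimage_closure_image (E ⁻¹' D)]
        exact hcl
      have hsubcl : closure (E ⁻¹' D) ⊆ {z : ↥(Set.Iic (ω_ 1 : Ordinal)) | z.1 ≤ ρ₀ ∨ z.1 = ω_ 1} := by
        refine closure_minimal ?_ ?_
        · rintro z hz
          rcases lt_or_eq_of_le (Set.mem_Iic.mp z.2) with h | h
          · exact Or.inl (hρ₀ z.1 ⟨h, hz⟩)
          · exact Or.inr h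
        · have hset : {z : ↥(Set.Iic (ω_ 1 : Ordinal)) | z.1 ≤ ρ₀ ∨ z.1 = ω_ 1} =
              Subtype.val ⁻¹' (Set.Iic ρ₀ ∪ {ω_ 1}) := by
            ext z
            simp [Set.mem_Iic]
            tauto
          rw [hset]
          exact (isClosed_Iic.union isClosed_singleton).preimage continuous_subtype_val
      rcases hsubcl hmem with h | h
      · exact absurd h (not_le.mpr hργ)
      · exact absurd h hγκ.ne
    · exact hcl
  -- split D' into constant-type and identity-type points
  set P : Set X := {q | q ∈ D' ∧ ∀ γ ∈ K q, ∀ h : γ ≤ ω_ 1, μ q (E ⟨γ, h⟩) = μ q (E topI)}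
    with hPdef
  set Q : Set X := D' \ P with hQdef
  have hPsub : P ⊆ D' := fun q hq => hq.1
  have hD'PQ : D' = P ∪ Q := by
    rw [hQdef, Set.union_diff_cancel' (fun x hx => hx) hPsub]
  have hQid : ∀ q ∈ Q, ∀ γ ∈ K q, ∀ h : γ ≤ ω_ 1, μ q (E ⟨γ, h⟩) = E ⟨γ, h⟩ := by
    rintro q ⟨hqD', hqnP⟩
    rcases hKcase q with hc | hc
    · exact absurd ⟨hqD', hc⟩ hqnP
    · exact hc
  -- intersect the clubs of all points of D'
  haveI : Countable ↥D' := hD'cnt.to_subtype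
  have hIK : ∀ β < (ω_ 1 : Ordinal), ∃ γ, β < γ ∧ γ < ω_ 1 ∧ ∀ q : ↥D', γ ∈ K q.1 :=
    clubs_inter (fun q : ↥D' => hKclub q.1)
  obtain ⟨γ₁, hγ₁ρ, hγ₁κ, hγ₁K⟩ := hIK ρ₀ hρ₀κ
  obtain ⟨γ₂, hγ₂γ₁, hγ₂κ, hγ₂K⟩ := hIK γ₁ hγ₁κ
  obtain ⟨γ₃, hγ₃γ₂, hγ₃κ, hγ₃K⟩ := hIK γ₂ hγ₂κ
  -- type extraction
  have htype : ∀ γ0, ρ₀ < γ0 → ∀ h0 : γ0 < ω_ 1,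
      (∀ γ, γ < ω_ 1 → (∀ q : ↥D', γ ∈ K q.1) →
          ∀ h : γ ≤ ω_ 1, μ (E ⟨γ0, h0.le⟩) (E ⟨γ, h⟩) = E ⟨γ, h⟩) ∨
      (∀ γ γ', γ < ω_ 1 → γ' < ω_ 1 → (∀ q : ↥D', γ ∈ K q.1) → (∀ q : ↥D', γ' ∈ K q.1) →
          ∀ (h : γ ≤ ω_ 1) (h' : γ' ≤ ω_ 1),
            μ (E ⟨γ0, h0.le⟩) (E ⟨γ, h⟩) = μ (E ⟨γ0, h0.le⟩) (E ⟨γ', h'⟩)) := by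
    intro γ0 hργ0 h0
    set x : X := E ⟨γ0, h0.le⟩ with hxdef
    have hxcl : x ∈ closure D' := hclD' γ0 hργ0 h0
    have hFne : (𝓝 x ⊓ Filter.principal D').NeBot :=
      mem_closure_iff_clusterPt.mp hxcl
    have hsplit : (𝓝 x ⊓ Filter.principal D') =
        (𝓝 x ⊓ Filter.principal P) ⊔ (𝓝 x ⊓ Filter.principal Q) := by
      rw [← inf_sup_left, Filter.sup_principal, ← hD'PQ]
    rw [hsplit] at hFne
    rcases Filter.sup_neBot.mp hFne with hne | hne
    · -- constant case
      refine Or.inr ?_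
      intro γ γ' hγκ' hγ'κ' hγK' hγ'K' h h'
      have hcommon : ∀ (γ'' : Ordinal) (h'' : γ'' ≤ ω_ 1), (∀ q : ↥D', γ'' ∈ K q.1) →
          Filter.Tendsto (fun q => μ q (E topI)) (𝓝 x ⊓ Filter.principal P)
            (𝓝 (μ x (E ⟨γ'', h''⟩))) := by
        intro γ'' h'' hγ''K
        have ht : Filter.Tendsto (fun q => μ q (E ⟨γ'', h''⟩)) (𝓝 x ⊓ Filter.principal P)
            (𝓝 (μ x (E ⟨γ'', h''⟩))) :=
          (((hsep (E ⟨γ'', h''⟩)).2.tendsto x)).mono_left inf_le_left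
        refine ht.congr' ?_
        refine Filter.eventuallyEq_of_mem (Filter.mem_inf_of_right
          (Filter.mem_principal_self P)) ?_
        intro q hq
        exact (hq.2 γ'' (hγ''K ⟨q, hq.1⟩) h'')
      exact tendsto_nhds_unique (hcommon γ h hγK') (hcommon γ' h' hγ'K')
    · -- identity case
      refine Or.inl ?_
      intro γ hγκ' hγK' h
      have ht : Filter.Tendsto (fun q => μ q (E ⟨γ, h⟩)) (𝓝 x ⊓ Filter.principal Q)
          (𝓝 (μ x (E ⟨γ, h⟩))) :=
        (((hsep (E ⟨γ, h⟩)).2.tendsto x)).mono_left inf_le_left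
      have heq : (fun q => μ q (E ⟨γ, h⟩)) =ᶠ[𝓝 x ⊓ Filter.principal Q]
          (fun _ => E ⟨γ, h⟩) := by
        refine Filter.eventuallyEq_of_mem (Filter.mem_inf_of_right
          (Filter.mem_principal_self Q)) ?_
        intro q hq
        exact hQid q hq γ (hγK' ⟨q, hq.1⟩) h
      exact tendsto_nhds_unique (ht.congr' heq) tendsto_const_nhds
  -- two points of the same type give a contradiction
  have hRR : ∀ a b, a ≠ b → ρ₀ < a → ∀ (ha : a < ω_ 1), ρ₀ < b → ∀ (hb : b < ω_ 1),
      (∀ q : ↥D', a ∈ K q.1) → (∀ q : ↥D', b ∈ K q.1) →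
      (∀ γ, γ < ω_ 1 → (∀ q : ↥D', γ ∈ K q.1) →
          ∀ h : γ ≤ ω_ 1, μ (E ⟨a, ha.le⟩) (E ⟨γ, h⟩) = E ⟨γ, h⟩) →
      (∀ γ, γ < ω_ 1 → (∀ q : ↥D', γ ∈ K q.1) →
          ∀ h : γ ≤ ω_ 1, μ (E ⟨b, hb.le⟩) (E ⟨γ, h⟩) = E ⟨γ, h⟩) → False := by
    intro a b hab hρa ha hρb hb haK hbK hRa hRb
    have h1 : μ (E ⟨a, ha.le⟩) (E ⟨b, hb.le⟩) = E ⟨b, hb.le⟩ := hRa b hb hbK hb.le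
    have h2 : μ (E ⟨b, hb.le⟩) (E ⟨a, ha.le⟩) = E ⟨a, ha.le⟩ := hRb a ha haK ha.le
    rw [hsymm] at h1
    rw [h1] at h2
    exact hab (congrArg Subtype.val (hEinj h2.symm)) |>.elim
  have hCC : ∀ a b, a ≠ b → ρ₀ < a → ∀ (ha : a < ω_ 1), ρ₀ < b → ∀ (hb : b < ω_ 1),
      (∀ q : ↥D', a ∈ K q.1) → (∀ q : ↥D', b ∈ K q.1) →
      (∀ γ γ', γ < ω_ 1 → γ' < ω_ 1 → (∀ q : ↥D', γ ∈ K q.1) → (∀ q : ↥D', γ' ∈ K q.1) →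
          ∀ (h : γ ≤ ω_ 1) (h' : γ' ≤ ω_ 1),
            μ (E ⟨a, ha.le⟩) (E ⟨γ, h⟩) = μ (E ⟨a, ha.le⟩) (E ⟨γ', h'⟩)) →
      (∀ γ γ', γ < ω_ 1 → γ' < ω_ 1 → (∀ q : ↥D', γ ∈ K q.1) → (∀ q : ↥D', γ' ∈ K q.1) →
          ∀ (h : γ ≤ ω_ 1) (h' : γ' ≤ ω_ 1),
            μ (E ⟨b, hb.le⟩) (E ⟨γ, h⟩) = μ (E ⟨b, hb.le⟩) (E ⟨γ', h'⟩)) → False := by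
    intro a b hab hρa ha hρb hb haK hbK hCa hCb
    have h1 : μ (E ⟨a, ha.le⟩) (E ⟨b, hb.le⟩) = E ⟨a, ha.le⟩ := by
      rw [hCa b a hb ha hbK haK hb.le ha.le]
      exact hidem _
    have h2 : μ (E ⟨b, hb.le⟩) (E ⟨a, ha.le⟩) = E ⟨b, hb.le⟩ := by
      rw [hCb a b ha hb haK hbK ha.le hb.le]
      exact hidem _
    rw [hsymm] at h1
    rw [h1] at h2
    exact hab (congrArg Subtype.val (hEinj h2)) |>.elim
  -- pigeonhole among the three chosen ordinals
  have hρ2 : ρ₀ < γ₂ := hγ₁ρ.trans hγ₂γ₁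
  have hρ3 : ρ₀ < γ₃ := hρ2.trans hγ₃γ₂
  have h12 : γ₁ ≠ γ₂ := (hγ₂γ₁).ne
  have h13 : γ₁ ≠ γ₃ := (hγ₂γ₁.trans hγ₃γ₂).ne
  have h23 : γ₂ ≠ γ₃ := (hγ₃γ₂).ne
  rcases htype γ₁ hγ₁ρ hγ₁κ with t1 | t1 <;>
    rcases htype γ₂ hρ2 hγ₂κ with t2 | t2 <;>
      rcases htype γ₃ hρ3 hγ₃κ with t3 | t3
  · exact hRR γ₁ γ₂ h12 hγ₁ρ hγ₁κ hρ2 hγ₂κ hγ₁K hγ₂K t1 t2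
  · exact hRR γ₁ γ₂ h12 hγ₁ρ hγ₁κ hρ2 hγ₂κ hγ₁K hγ₂K t1 t2
  · exact hRR γ₁ γ₃ h13 hγ₁ρ hγ₁κ hρ3 hγ₃κ hγ₁K hγ₃K t1 t3
  · exact hCC γ₂ γ₃ h23 hρ2 hγ₂κ hρ3 hγ₃κ hγ₂K hγ₃K t2 t3
  · exact hRR γ₂ γ₃ h23 hρ2 hγ₂κ hρ3 hγ₃κ hγ₂K hγ₃K t2 t3
  · exact hCC γ₁ γ₃ h13 hγ₁ρ hγ₁κ hρ3 hγ₃κ hγ₁K hγ₃K t1 t3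
  · exact hCC γ₁ γ₂ h12 hγ₁ρ hγ₁κ hρ2 hγ₂κ hγ₁K hγ₂K t1 t2
  · exact hCC γ₁ γ₂ h12 hγ₁ρ hγ₁κ hρ2 hγ₂κ hγ₁K hγ₂K t1 t2
end

section
/- If a separable Hausdorff topological space X contains a cocountable subset homeomorphic to [0, ω₁], then for every n ≥ 2, X admits no diagonally continuous n-mean μ : Xⁿ → X. -/
open Ordinal Topology

/-- `f : Xⁿ → Y` is diagonally continuous: for every `g : X → Xⁿ` each of whose
components is a constant function or the identity, `f ∘ g` is continuous. -/
def DiagCts {X Y : Type*} [TopologicalSpace X] [TopologicalSpace Y] {n : ℕ}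
    (f : (Fin n → X) → Y) : Prop :=
  ∀ g : Fin n → X → X,
    (∀ i, (∃ c, ∀ x, g i x = c) ∨ (∀ x, g i x = x)) →
    Continuous (fun x => f (fun i => g i x))

/-- `μ : Xⁿ → X` is an `n`-mean: idempotent on the diagonal and invariant under
all permutations of its arguments. -/
def IsNMean {X : Type*} {n : ℕ} (μ : (Fin n → X) → X) : Prop :=
  (∀ x : X, μ (fun _ => x) = x) ∧
    ∀ (σ : Equiv.Perm (Fin n)) (x : Fin n → X), μ (x ∘ σ) = μ x


namespace NoMean

set_option linter.unusedSectionVars false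
set_option linter.unusedVariables false
set_option maxHeartbeats 1000000

open Ordinal Topology Set Filter Cardinal

universe u v

noncomputable abbrev o1 : Ordinal.{u} := ω_ 1

lemma o1_isLimit : Order.IsSuccLimit (o1 : Ordinal.{u}) := Cardinal.isSuccLimit_omega 1

lemma o1_pos : (0:Ordinal.{u}) < o1 := Ordinal.omega_pos 1

lemma seq_sup_lt (f : ℕ → Ordinal.{u}) (hf : ∀ i, f i < o1) : (⨆ i, f i) < o1 := by
  have := Ordinal.iSup_lt_omega_one (α := ℕ) (f := f)
    (by simpa [Cardinal.ord_aleph] using hf)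
  simpa [Cardinal.ord_aleph] using this

lemma card_le_of_lt_o1 {x : Ordinal.{u}} (hx : x < o1) : x.card ≤ Cardinal.aleph0 := by
  have : x.card < Cardinal.aleph 1 := by
    rwa [← Cardinal.lt_ord, Cardinal.ord_aleph]
  rwa [← Cardinal.succ_aleph0, Order.lt_succ_iff] at this

lemma countable_Iic_of_lt_o1 {x : Ordinal.{u}} (hx : x < o1) : (Set.Iic x).Countable := by
  have h1 : (Set.Iio x).Countable := by
    rw [← Set.countable_coe_iff, ← Cardinal.mk_le_aleph0_iff]
    calc #(Set.Iio x) = Cardinal.lift.{u+1} x.card := Ordinal.mk_Iio_ordinal x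
    _ ≤ Cardinal.lift.{u+1} Cardinal.aleph0 := Cardinal.lift_le.2 (card_le_of_lt_o1 hx)
    _ = Cardinal.aleph0 := Cardinal.lift_aleph0
  have : Set.Iic x = Set.Iio x ∪ {x} := by
    ext y; simp [le_iff_lt_or_eq]
  rw [this]
  exact h1.union (Set.countable_singleton x)

lemma countable_set_sup_lt {s : Set Ordinal.{u}} (hs : s.Countable)
    (h : ∀ x ∈ s, x < o1) : ∃ b, b < o1 ∧ ∀ x ∈ s, x ≤ b := by
  rcases s.eq_empty_or_nonempty with rfl | hne
  · exact ⟨0, o1_pos, by simp⟩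
  · obtain ⟨g, hg⟩ := (Set.countable_iff_exists_surjective hne).1 hs
    refine ⟨⨆ i, (g i : Ordinal), seq_sup_lt _ (fun i => h _ (g i).2), ?_⟩
    intro x hx
    obtain ⟨i, hi⟩ := hg ⟨x, hx⟩
    calc x = (g i : Ordinal) := by rw [hi]
    _ ≤ _ := le_ciSup (Ordinal.bddAbove_range _) i

/-- Unboundedness below `ω₁`. -/
def Unb (S : Set Ordinal.{u}) : Prop := ∀ b, b < o1 → ∃ γ ∈ S, b < γ

/-- closed unbounded subsets of `ω₁` (closure stated via countable monotone suprema). -/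
structure GoodClub (S : Set Ordinal.{u}) : Prop where
  sub : ∀ x ∈ S, x < o1
  unb : Unb S
  closed : ∀ s : ℕ → Ordinal.{u}, (∀ i, s i ∈ S) → Monotone s → (⨆ i, s i) ∈ S

lemma GoodClub.iio : GoodClub (Set.Iio (o1 : Ordinal.{u})) := by
  refine ⟨fun x hx => hx, fun b hb => ⟨b+1, o1_isLimit.succ_lt hb, lt_add_one b⟩, ?_⟩
  intro s hs _
  exact seq_sup_lt s hs

lemma tendsto_seq_iSup (s : ℕ → Ordinal.{u}) (hs : Monotone s) :
    Filter.Tendsto s Filter.atTop (nhds (⨆ i, s i)) := by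
  apply tendsto_atTop_isLUB hs
  exact isLUB_csSup (Set.range_nonempty s) (Ordinal.bddAbove_range s)

lemma iSup_le_iSup_of_lt {s t : ℕ → Ordinal.{u}} (h : ∀ i, ∃ j, s i ≤ t j) :
    (⨆ i, s i) ≤ ⨆ i, t i := by
  refine ciSup_le fun i => ?_
  obtain ⟨j, hj⟩ := h i
  exact hj.trans (le_ciSup (Ordinal.bddAbove_range t) j)

/-- countable intersections of clubs are clubs -/
lemma GoodClub.iInter (C : ℕ → Set Ordinal.{u}) (hC : ∀ i, GoodClub (C i)) :
    GoodClub (⋂ i, C i) := by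
  constructor
  · intro x hx
    exact (hC 0).sub x (Set.mem_iInter.1 hx 0)
  · intro b hb
    -- build an interleaving sequence
    have hch : ∀ i : ℕ, ∀ b', b' < o1 → ∃ γ, γ ∈ C i ∧ b' < γ := by
      intro i b' hb'
      obtain ⟨γ, hγ, hγ2⟩ := (hC i).unb b' hb'
      exact ⟨γ, hγ, hγ2⟩
    classical
    -- x k ∈ C ((Nat.unpair k).1), strictly increasing, all < o1
    let F : ℕ → Ordinal.{u} → Ordinal.{u} := fun k b' =>
      if h : b' < o1 then Classical.choose (hch (Nat.unpair k).1 b' h) else 0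
    let x : ℕ → Ordinal.{u} := fun k => Nat.rec (F 0 b) (fun k ih => F (k+1) ih) k
    have hx0 : x 0 = F 0 b := rfl
    have hxs : ∀ k, x (k+1) = F (k+1) (x k) := fun k => rfl
    have key : ∀ k, x k ∈ C ((Nat.unpair k).1) ∧ (k = 0 → b < x k) ∧
        (∀ j, k = j + 1 → x j < x k) ∧ x k < o1 := by
      intro k
      induction k with
      | zero =>
        have : F 0 b = Classical.choose (hch (Nat.unpair 0).1 b hb) := by
          simp [F, hb]
        have hsp := Classical.choose_spec (hch (Nat.unpair 0).1 b hb)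
        refine ⟨by rw [hx0, this]; exact hsp.1, fun _ => by rw [hx0, this]; exact hsp.2, ?_, ?_⟩
        · intro j hj; exact absurd hj (Nat.succ_ne_zero j).symm
        · rw [hx0, this]; exact (hC _).sub _ hsp.1
      | succ k ih =>
        have hlt : x k < o1 := ih.2.2.2
        have : F (k+1) (x k) = Classical.choose (hch (Nat.unpair (k+1)).1 (x k) hlt) := by
          simp [F, hlt]
        have hsp := Classical.choose_spec (hch (Nat.unpair (k+1)).1 (x k) hlt)
        refine ⟨by rw [hxs, this]; exact hsp.1, fun h => absurd h (Nat.succ_ne_zero k), ?_, ?_⟩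
        · intro j hj
          cases hj
          · rw [hxs, this]; exact hsp.2
        · rw [hxs, this]; exact (hC _).sub _ hsp.1
    have hmono : StrictMono x := strictMono_nat_of_lt_succ (fun k => (key (k+1)).2.2.1 k rfl)
    refine ⟨⨆ k, x k, Set.mem_iInter.2 ?_, lt_of_lt_of_le ((key 0).2.1 rfl)
      (le_ciSup (Ordinal.bddAbove_range x) 0)⟩
    intro i
    -- subsequence hitting C i
    let y : ℕ → Ordinal.{u} := fun j => x (Nat.pair i j)
    have hy : ∀ j, y j ∈ C i := by
      intro j
      have := (key (Nat.pair i j)).1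
      rwa [Nat.unpair_pair] at this
    have hym : Monotone y := by
      intro a b hab
      rcases lt_or_eq_of_le hab with h | h
      · exact (hmono (Nat.pair_lt_pair_right i h)).le
      · rw [h]
    have hsup : (⨆ j, y j) = ⨆ k, x k := by
      apply le_antisymm
      · exact iSup_le_iSup_of_lt (fun j => ⟨Nat.pair i j, le_rfl⟩)
      · exact iSup_le_iSup_of_lt (fun k => ⟨k, hmono.monotone (Nat.right_le_pair i k)⟩)
    rw [← hsup]
    exact (hC i).closed y hy hym
  · intro s hs hmono
    exact Set.mem_iInter.2 fun i => (hC i).closed s (fun k => Set.mem_iInter.1 (hs k) i) hmono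

lemma GoodClub.inter {S T : Set Ordinal.{u}} (hS : GoodClub S) (hT : GoodClub T) :
    GoodClub (S ∩ T) := by
  classical
  have h : (⋂ i : ℕ, (if i % 2 = 0 then S else T)) = S ∩ T := by
    ext x
    constructor
    · intro hx
      have h0 := Set.mem_iInter.1 hx 0
      have h1 := Set.mem_iInter.1 hx 1
      simp at h0 h1
      exact ⟨h0, h1⟩
    · intro hx
      refine Set.mem_iInter.2 fun i => ?_
      by_cases h : i % 2 = 0 <;> simp [h, hx.1, hx.2]
  rw [← h]
  exact GoodClub.iInter _ (fun i => by by_cases h : i % 2 = 0 <;> simp [h, hS, hT])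


section Top
variable {X : Type v} [TopologicalSpace X] [T2Space X]

lemma not_unb {S : Set Ordinal.{u}} (h : ¬ Unb S) : ∃ b, b < o1 ∧ ∀ γ ∈ S, γ ≤ b := by
  unfold Unb at h
  push_neg at h
  obtain ⟨b, hb, h2⟩ := h
  exact ⟨b, hb, fun γ hγ => h2 γ hγ⟩

lemma tail_mem {h : Ordinal.{u} → X} (hc : Continuous h) {N : Set X} (hNo : IsOpen N)
    (hN : h o1 ∈ N) : ∃ θ, θ < o1 ∧ ∀ γ, θ < γ → γ ≤ o1 → h γ ∈ N := by
  have hU : IsOpen (h ⁻¹' N) := hNo.preimage hc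
  obtain ⟨a, ha, hsub⟩ := (Ordinal.isOpen_iff.1 hU) o1 hN o1_isLimit
  refine ⟨a, ha, fun γ hγ1 hγ2 => ?_⟩
  rcases lt_or_eq_of_le hγ2 with h' | h'
  · exact hsub ⟨hγ1, h'⟩
  · rw [h']; exact hN

lemma fiber_unb_eq {h : Ordinal.{u} → X} (hc : Continuous h) {x : X}
    (hU : Unb {γ | γ < o1 ∧ h γ = x}) : h o1 = x := by
  have hF : IsClosed (h ⁻¹' {x}) := (isClosed_singleton).preimage hc
  have : (o1 : Ordinal.{u}) ∈ h ⁻¹' {x} := by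
    rw [← hF.closure_eq]
    rw [mem_closure_iff]
    intro U hUo hU1
    obtain ⟨a, ha, hsub⟩ := (Ordinal.isOpen_iff.1 hUo) o1 hU1 o1_isLimit
    obtain ⟨γ, ⟨hγ1, hγ2⟩, hγ3⟩ := hU a ha
    exact ⟨γ, hsub ⟨hγ3, hγ1⟩, hγ2⟩
  simpa using this

lemma eq_at_sup {f g : Ordinal.{u} → X} (hf : Continuous f) (hg : Continuous g)
    {s : ℕ → Ordinal.{u}} (hm : Monotone s) (h : ∀ i, f (s i) = g (s i)) :
    f (⨆ i, s i) = g (⨆ i, s i) := by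
  have hs := tendsto_seq_iSup s hm
  have h1 : Filter.Tendsto (fun i => f (s i)) Filter.atTop (nhds (f (⨆ i, s i))) :=
    (hf.tendsto _).comp hs
  have h2 : Filter.Tendsto (fun i => f (s i)) Filter.atTop (nhds (g (⨆ i, s i))) := by
    have := (hg.tendsto _).comp hs
    simpa [funext h, Function.comp_def] using this
  exact tendsto_nhds_unique h1 h2

lemma goodClub_eq {f g : Ordinal.{u} → X} (hf : Continuous f) (hg : Continuous g)
    (hU : Unb {γ | γ < o1 ∧ f γ = g γ}) : GoodClub {γ | γ < o1 ∧ f γ = g γ} := by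
  refine ⟨fun x hx => hx.1, hU, ?_⟩
  intro s hs hm
  exact ⟨seq_sup_lt s (fun i => (hs i).1), eq_at_sup hf hg hm (fun i => (hs i).2)⟩

lemma goodClub_tail {θ : Ordinal.{u}} (hθ : θ < o1) :
    GoodClub {γ | θ < γ ∧ γ < o1} := by
  refine ⟨fun x hx => hx.2, fun b hb => ?_, ?_⟩
  · refine ⟨max θ b + 1, ⟨?_, ?_⟩, ?_⟩
    · exact (le_max_left θ b).trans_lt (lt_add_one _)
    · exact o1_isLimit.succ_lt (max_lt hθ hb)
    · exact (le_max_right θ b).trans_lt (lt_add_one _)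
  · intro s hs hm
    constructor
    · exact lt_of_lt_of_le (hs 0).1 (le_ciSup (Ordinal.bddAbove_range s) 0)
    · exact seq_sup_lt s (fun i => (hs i).2)


/-- setup for the copy of `[0, ω₁]` -/
structure ESetup (E : Ordinal.{u} → X) : Prop where
  cont : Continuous E
  top : ∀ o, o1 ≤ o → E o = E o1
  inj : ∀ a, a ≤ o1 → ∀ b, b ≤ o1 → E a = E b → a = b
  acc : (Set.range E)ᶜ.Countable

variable {E : Ordinal.{u} → X}

lemma ESetup.min (hE : ESetup E) (c : Ordinal.{u}) : E (min c o1) = E c := by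
  rcases le_total c o1 with h | h
  · rw [min_eq_left h]
  · rw [min_eq_right h, hE.top c h]

/-- The master trichotomy for continuous maps `[0,ω₁] → X`. -/
lemma lemS (hE : ESetup E) {h : Ordinal.{u} → X} (hc : Continuous h) :
    (∃ θ, θ < o1 ∧ ∀ γ, θ < γ → γ < o1 → h γ = h o1) ∨
    (h o1 = E o1 ∧ GoodClub {γ | γ < o1 ∧ h γ = E o1}) ∨
    (h o1 = E o1 ∧ GoodClub {γ | γ < o1 ∧ h γ = E γ}) := by
  classical
  set r := h o1 with hr
  -- fibers over points other than r are bounded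
  have step_fb : ∀ x : X, x ≠ r → ∃ b, b < o1 ∧ ∀ γ, γ < o1 → h γ = x → γ ≤ b := by
    intro x hx
    by_cases hU : Unb {γ | γ < o1 ∧ h γ = x}
    · exact absurd (fiber_unb_eq hc hU).symm hx
    · obtain ⟨b, hb1, hb2⟩ := not_unb hU
      exact ⟨b, hb1, fun γ h1 h2 => hb2 γ ⟨h1, h2⟩⟩
  -- values outside the range of E (other than r) occur only boundedly often
  have step_bad : ∃ B, B < o1 ∧ ∀ γ, γ < o1 → B < γ → h γ ∈ Set.range E ∨ h γ = r := by
    set φ : X → Ordinal.{u} := fun x => if hx : x ≠ r then Classical.choose (step_fb x hx) else 0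
      with hφ
    have hφlt : ∀ x, φ x < o1 := by
      intro x
      by_cases hx : x ≠ r
      · simp only [hφ, dif_pos hx]
        exact (Classical.choose_spec (step_fb x hx)).1
      · simp only [hφ, dif_neg hx]; exact o1_pos
    have hctb : (φ '' ((Set.range E)ᶜ \ {r})).Countable :=
      (hE.acc.mono Set.diff_subset).image φ
    obtain ⟨B, hB1, hB2⟩ := countable_set_sup_lt hctb (by
      rintro x ⟨y, -, rfl⟩; exact hφlt y)
    refine ⟨B, hB1, fun γ hγ hBγ => ?_⟩
    by_contra hcon
    push_neg at hcon
    obtain ⟨h1, h2⟩ := hcon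
    have hmem : h γ ∈ (Set.range E)ᶜ \ {r} := ⟨h1, h2⟩
    have : γ ≤ φ (h γ) := by
      have := Classical.choose_spec (step_fb (h γ) h2)
      have heq : φ (h γ) = Classical.choose (step_fb (h γ) h2) := by
        simp only [hφ, dif_pos h2]
      rw [heq]
      exact this.2 γ hγ rfl
    exact absurd (this.trans (hB2 _ ⟨h γ, hmem, rfl⟩)) (not_le.2 hBγ)
  obtain ⟨B, hB, hBP⟩ := step_bad
  -- the induced ordinal value
  set uu : Ordinal.{u} → Ordinal.{u} := fun γ =>
    if hh : h γ ∈ Set.range E then min (Classical.choose hh) o1 else 0 with huu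
  have hu : ∀ γ, h γ ∈ Set.range E → uu γ ≤ o1 ∧ E (uu γ) = h γ := by
    intro γ hh
    constructor
    · simp only [huu, dif_pos hh]; exact min_le_right _ _
    · simp only [huu, dif_pos hh]
      rw [hE.min]
      exact Classical.choose_spec hh
  -- pigeonhole: small u-values occur boundedly often (among non-r values)
  have pigeon : ∀ w, w < o1 →
      ∃ b, b < o1 ∧ ∀ γ, γ < o1 → h γ ∈ Set.range E → uu γ ≤ w → h γ ≠ r → γ ≤ b := by
    intro w hw
    set ψ : Ordinal.{u} → Ordinal.{u} := fun o =>
      if ho : ¬ Unb {γ | γ < o1 ∧ h γ = E o} then Classical.choose (not_unb ho) else 0 with hψ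
    have hψlt : ∀ o, ψ o < o1 := by
      intro o
      by_cases ho : ¬ Unb {γ | γ < o1 ∧ h γ = E o}
      · simp only [hψ, dif_pos ho]; exact (Classical.choose_spec (not_unb ho)).1
      · simp only [hψ, dif_neg ho]; exact o1_pos
    obtain ⟨b, hb1, hb2⟩ := countable_set_sup_lt
      (((countable_Iic_of_lt_o1 hw).image ψ)) (by rintro x ⟨y, -, rfl⟩; exact hψlt y)
    refine ⟨b, hb1, fun γ hγ hhr huw hne => ?_⟩
    by_cases hUo : Unb {γ' | γ' < o1 ∧ h γ' = E (uu γ)}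
    · have := fiber_unb_eq hc hUo
      exact absurd ((hu γ hhr).2.symm.trans this.symm) hne
    · have hsp := Classical.choose_spec (not_unb hUo)
      have heq : ψ (uu γ) = Classical.choose (not_unb hUo) := by
        simp only [hψ, dif_pos hUo]
      have hγle : γ ≤ ψ (uu γ) := by
        rw [heq]
        exact hsp.2 γ ⟨hγ, (hu γ hhr).2.symm⟩
      exact hγle.trans (hb2 _ ⟨uu γ, huw, rfl⟩)
  by_cases hrΩ : r = E o1
  · -- the case r = Ω
    by_cases h2a : Unb {γ | γ < o1 ∧ h γ = E o1}
    · exact Or.inr (Or.inl ⟨hrΩ, goodClub_eq hc continuous_const h2a⟩)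
    · -- branch 2b
      obtain ⟨bT, hbT1, hbT2⟩ := not_unb h2a
      set θ₀ := max bT B with hθ₀
      have hθ₀lt : θ₀ < o1 := max_lt hbT1 hB
      have htail : ∀ γ, θ₀ < γ → γ < o1 →
          h γ ∈ Set.range E ∧ h γ ≠ E o1 ∧ uu γ < o1 := by
        intro γ h1 h2
        have hne : h γ ≠ E o1 := by
          intro he
          exact absurd (hbT2 γ ⟨h2, he⟩) (not_le.2 (lt_of_le_of_lt (le_max_left _ _) h1))
        have hmem : h γ ∈ Set.range E := by
          rcases hBP γ h2 (lt_of_le_of_lt (le_max_right _ _) h1) with h' | h'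
          · exact h'
          · rw [hrΩ] at h'; exact absurd h' hne
        refine ⟨hmem, hne, ?_⟩
        rcases lt_or_eq_of_le (hu γ hmem).1 with h' | h'
        · exact h'
        · exfalso; apply hne; rw [← (hu γ hmem).2, h']
      -- the θ̂ function: beyond it, u exceeds w
      have hth : ∀ w, w < o1 → ∃ t, t < o1 ∧ ∀ γ, t < γ → γ < o1 → θ₀ < γ → w < uu γ := by
        intro w hw
        obtain ⟨b, hb1, hb2⟩ := pigeon w hw
        refine ⟨max b θ₀, max_lt hb1 hθ₀lt, fun γ h1 h2 h3 => ?_⟩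
        by_contra hcon
        push_neg at hcon
        obtain ⟨hmem, hne, -⟩ := htail γ h3 h2
        have : γ ≤ b := hb2 γ h2 hmem hcon (by rw [hrΩ]; exact hne)
        exact absurd this (not_le.2 (lt_of_le_of_lt (le_max_left _ _) h1))
      -- bound of u-values on initial segments
      have husup : ∀ x, x < o1 → ∃ s, s < o1 ∧ ∀ β, β ≤ x → θ₀ < β → uu β ≤ s := by
        intro x hx
        obtain ⟨s, hs1, hs2⟩ := countable_set_sup_lt
          (((countable_Iic_of_lt_o1 hx).mono Set.Ioc_subset_Iic_self).image uu) (by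
            rintro y ⟨β, hβ, rfl⟩
            exact (htail β hβ.1 (lt_of_le_of_lt hβ.2 hx)).2.2)
        exact ⟨s, hs1, fun β h1 h2 => hs2 _ ⟨β, ⟨h2, h1⟩, rfl⟩⟩
      -- the step function
      have hF : ∀ b, b < o1 → ∃ c, c < o1 ∧ b < c ∧
          (∀ γ, c ≤ γ → γ < o1 → θ₀ < γ → b < uu γ) ∧
          (∀ β, β ≤ b → θ₀ < β → uu β < c) := by
        intro b hb
        obtain ⟨t, ht1, ht2⟩ := hth b hb
        obtain ⟨s, hs1, hs2⟩ := husup b hb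
        refine ⟨max (max t s) b + 1, o1_isLimit.succ_lt (max_lt (max_lt ht1 hs1) hb), ?_, ?_, ?_⟩
        · exact lt_of_le_of_lt (le_max_right _ _) (lt_add_one _)
        · intro γ h1 h2 h3
          refine ht2 γ ?_ h2 h3
          calc t ≤ max (max t s) b := le_max_of_le_left (le_max_left _ _)
          _ < max (max t s) b + 1 := lt_add_one _
          _ ≤ γ := h1
        · intro β h1 h2
          calc uu β ≤ s := hs2 β h1 h2
          _ ≤ max (max t s) b := le_max_of_le_left (le_max_right _ _)
          _ < max (max t s) b + 1 := lt_add_one _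
      -- show unboundedness of the fixed point set
      have hUnb2b : Unb {γ | γ < o1 ∧ h γ = E γ} := by
        intro b₀ hb₀
        -- recursive sequence
        set x0 : Ordinal.{u} := max b₀ θ₀ + 1 with hx0def
        have hx0lt : x0 < o1 := o1_isLimit.succ_lt (max_lt hb₀ hθ₀lt)
        set FF : Ordinal.{u} → Ordinal.{u} := fun b =>
          if hb : b < o1 then Classical.choose (hF b hb) else 0 with hFF
        set x : ℕ → Ordinal.{u} := fun k => Nat.rec x0 (fun _ ih => FF ih) k with hx
        have hxs : ∀ k, x (k+1) = FF (x k) := fun k => rfl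
        have hFFeq : ∀ b (hb : b < o1), FF b = Classical.choose (hF b hb) := by
          intro b hb
          simp only [hFF]
          rw [dif_pos hb]
        have key : ∀ k, x k < o1 ∧ θ₀ < x k ∧ b₀ < x k ∧ x k < x (k+1) := by
          intro k
          induction k with
          | zero =>
            refine ⟨hx0lt, lt_of_le_of_lt (le_max_right _ _) (lt_add_one _),
              lt_of_le_of_lt (le_max_left _ _) (lt_add_one _), ?_⟩
            rw [hxs 0, hFFeq (x 0) hx0lt]
            exact (Classical.choose_spec (hF (x 0) hx0lt)).2.1
          | succ k ih =>
            have hlt : x (k+1) < o1 := by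
              rw [hxs k, hFFeq (x k) ih.1]
              exact (Classical.choose_spec (hF (x k) ih.1)).1
            refine ⟨hlt, ih.2.1.trans ih.2.2.2, ih.2.2.1.trans ih.2.2.2, ?_⟩
            rw [hxs (k+1), hFFeq (x (k+1)) hlt]
            exact (Classical.choose_spec (hF (x (k+1)) hlt)).2.1
        have hFspec : ∀ k, (∀ γ, x (k+1) ≤ γ → γ < o1 → θ₀ < γ → x k < uu γ) ∧
            (∀ β, β ≤ x k → θ₀ < β → uu β < x (k+1)) := by
          intro k
          rw [hxs k, hFFeq (x k) (key k).1]
          exact ⟨(Classical.choose_spec (hF (x k) (key k).1)).2.2.1,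
            (Classical.choose_spec (hF (x k) (key k).1)).2.2.2⟩
        have hmono : StrictMono x := strictMono_nat_of_lt_succ (fun k => (key k).2.2.2)
        set γs : Ordinal.{u} := ⨆ k, x k with hγs
        have hγlt : γs < o1 := seq_sup_lt x (fun k => (key k).1)
        have hxle : ∀ k, x k ≤ γs := fun k => le_ciSup (Ordinal.bddAbove_range x) k
        have hγθ : θ₀ < γs := lt_of_lt_of_le (key 0).2.1 (hxle 0)
        have hγb : b₀ < γs := lt_of_lt_of_le (key 0).2.2.1 (hxle 0)
        obtain ⟨hmemγ, hneγ, huγ⟩ := htail γs hγθ hγlt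
        -- lower bound on uu γs
        have hlow : γs ≤ uu γs := by
          refine ciSup_le fun k => ?_
          exact ((hFspec k).1 γs (hxle (k+1)) hγlt hγθ).le
        -- upper bound via compactness
        have hupp : uu γs ≤ γs := by
          have hcpt : IsCompact (E '' Set.Iic γs) := by
            have : Set.Iic γs = Set.Icc 0 γs := by
              rw [← Set.Icc_bot]
              rfl
            rw [this]
            exact (isCompact_Icc).image hE.cont
          have hcl : IsClosed (E '' Set.Iic γs) := hcpt.isClosed
          have htd : Filter.Tendsto (fun k => h (x k)) Filter.atTop (nhds (h γs)) := by
            have := (hc.tendsto γs).comp (tendsto_seq_iSup x hmono.monotone)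
            simpa [hγs, Function.comp_def] using this
          have hmem2 : ∀ k, h (x k) ∈ E '' Set.Iic γs := by
            intro k
            obtain ⟨hmk, hnk, hule⟩ := htail (x k) (key k).2.1 (key k).1
            refine ⟨uu (x k), ?_, (hu _ hmk).2⟩
            have : uu (x k) < x (k+1) := (hFspec k).2 (x k) le_rfl (key k).2.1
            exact (this.trans_le (hxle (k+1))).le
          have : h γs ∈ E '' Set.Iic γs :=
            hcl.mem_of_tendsto htd (Filter.Eventually.of_forall hmem2)
          obtain ⟨s, hs1, hs2⟩ := this
          have : uu γs = s := by
            apply hE.inj _ huγ.le _ (hs1.trans hγlt.le)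
            rw [(hu _ hmemγ).2, hs2]
          rw [this]
          exact hs1
        have huuγ : uu γs = γs := le_antisymm hupp hlow
        refine ⟨γs, ⟨hγlt, ?_⟩, hγb⟩
        rw [← (hu _ hmemγ).2, huuγ]
      exact Or.inr (Or.inr ⟨hrΩ, goodClub_eq hc hE.cont hUnb2b⟩)
  · -- the case r ≠ Ω : branch 1
    left
    have hHbd : ¬ Unb {γ | γ < o1 ∧ h γ ∈ Set.range E ∧ h γ ≠ r} := by
      intro hUnb
      obtain ⟨N, NΩ, hNo, hNΩo, hrN, hΩN, hdisj⟩ := t2_separation hrΩ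
      obtain ⟨θN, hθN1, hθN2⟩ := tail_mem hc hNo hrN
      obtain ⟨ρ, hρ1, hρ2⟩ := tail_mem hE.cont hNΩo hΩN
      obtain ⟨θρ, hθρ1, hθρ2⟩ := pigeon ρ hρ1
      obtain ⟨γ, ⟨hγ1, hγ2, hγ3⟩, hγ4⟩ := hUnb (max θN θρ) (max_lt hθN1 hθρ1)
      have hhN : h γ ∈ N := hθN2 γ (lt_of_le_of_lt (le_max_left _ _) hγ4) hγ1.le
      have huγ : ρ < uu γ := by
        by_contra hcon
        push_neg at hcon
        exact absurd (hθρ2 γ hγ1 hγ2 hcon hγ3)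
          (not_le.2 (lt_of_le_of_lt (le_max_right _ _) hγ4))
      have hhNΩ : h γ ∈ NΩ := by
        rw [← (hu γ hγ2).2]
        exact hρ2 _ huγ (hu γ hγ2).1
      exact absurd (Set.mem_inter hhN hhNΩ) (by
        rw [Set.disjoint_iff_inter_eq_empty] at hdisj
        simp [hdisj])
    obtain ⟨θH, hθH1, hθH2⟩ := not_unb hHbd
    refine ⟨max B θH, max_lt hB hθH1, fun γ h1 h2 => ?_⟩
    by_contra hne
    rcases hBP γ h2 (lt_of_le_of_lt (le_max_left _ _) h1) with h' | h'
    · exact absurd (hθH2 γ ⟨h2, h', hne⟩) (not_le.2 (lt_of_le_of_lt (le_max_right _ _) h1))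
    · exact hne h'



lemma Eo1_ne {X : Type v} [TopologicalSpace X] [T2Space X] {E : Ordinal.{u} → X}
    {a : Ordinal.{u}} (hE : ESetup E) (ha : a < o1) : E a ≠ E o1 := by
  intro h
  exact absurd (hE.inj a ha.le o1 le_rfl h) ha.ne

lemma mem_closure_of_dense {X : Type v} [TopologicalSpace X] {S T : Set X}
    (hd : Dense (S ∪ T)) {x : X} (hx : x ∉ closure T) : x ∈ closure S := by
  have : x ∈ closure (S ∪ T) := hd x
  rw [closure_union] at this
  rcases this with h | h
  · exact h
  · exact absurd h hx

section Asym

/-- The "both slots neutral" case. -/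
lemma AsymII (hE : ESetup E) {Q : Set X} (hQc : Q.Countable) (hQd : Dense Q)
    (R : X → X → X) (hR1 : ∀ c, Continuous fun t => R t c)
    (hR2 : ∀ c, Continuous fun t => R c t)
    {C : Set Ordinal.{u}} (hC : GoodClub C)
    (hCid1 : ∀ γ ∈ C, R (E γ) (E o1) = E γ)
    (hCid2 : ∀ γ ∈ C, R (E o1) (E γ) = E γ) : False := by
  classical
  set Q1 : Set X :=
    {q | q ∈ Q ∧ ∃ θ, θ < o1 ∧ ∀ β, θ < β → β < o1 → R (E β) q = R (E o1) q} with hQ1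
  have hQ1sub : Q1 ⊆ Q := fun q hq => hq.1
  have hQ2 : ∀ q ∈ Q \ Q1, R (E o1) q = E o1 := by
    intro q hq
    have hcq : Continuous fun β : Ordinal.{u} => R (E β) q := (hR1 q).comp hE.cont
    rcases lemS hE hcq with h1 | h2 | h3
    · exact absurd ⟨hq.1, h1⟩ hq.2
    · exact h2.1
    · exact h3.1
  -- uniform threshold for Q1
  have hθ : ∃ Θ, Θ < o1 ∧ ∀ q ∈ Q1, ∀ β, Θ < β → β < o1 → R (E β) q = R (E o1) q := by
    set φ : X → Ordinal.{u} := fun q =>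
      if hq : ∃ θ, θ < o1 ∧ ∀ β, θ < β → β < o1 → R (E β) q = R (E o1) q then
        Classical.choose hq else 0 with hφ
    have hφlt : ∀ q, φ q < o1 := by
      intro q
      by_cases hq : ∃ θ, θ < o1 ∧ ∀ β, θ < β → β < o1 → R (E β) q = R (E o1) q
      · simp only [hφ, dif_pos hq]; exact (Classical.choose_spec hq).1
      · simp only [hφ, dif_neg hq]; exact o1_pos
    obtain ⟨Θ, hΘ1, hΘ2⟩ := countable_set_sup_lt (hQc.image φ)
      (by rintro x ⟨y, -, rfl⟩; exact hφlt y)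
    refine ⟨Θ, hΘ1, fun q hq β h1 h2 => ?_⟩
    have hex := hq.2
    have hspec := Classical.choose_spec hex
    have : φ q = Classical.choose hex := by simp only [hφ, dif_pos hex]
    refine hspec.2 β ?_ h2
    calc Classical.choose hex = φ q := this.symm
    _ ≤ Θ := hΘ2 _ ⟨q, hQ1sub hq, rfl⟩
    _ < β := h1
  obtain ⟨Θ, hΘ1, hΘ2⟩ := hθ
  -- two anchors
  obtain ⟨β, hβC, hβΘ⟩ := hC.unb Θ hΘ1
  have hβ1 : β < o1 := hC.sub _ hβC
  obtain ⟨β', hβ'C, hββ'⟩ := hC.unb β hβ1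
  have hβ'1 : β' < o1 := hC.sub _ hβ'C
  -- eventual constancy of anchors
  have anchor : ∀ b ∈ C, ∃ d, d < o1 ∧ ∀ γ, d < γ → γ < o1 → R (E b) (E γ) = E b := by
    intro b hb
    have hcb : Continuous fun γ : Ordinal.{u} => R (E b) (E γ) := (hR2 (E b)).comp hE.cont
    rcases lemS hE hcb with h1 | h2 | h3
    · obtain ⟨d, hd1, hd2⟩ := h1
      refine ⟨d, hd1, fun γ hγ1 hγ2 => ?_⟩
      rw [hd2 γ hγ1 hγ2, hCid1 b hb]
    · exact absurd ((hCid1 b hb).symm.trans h2.1) (Eo1_ne hE (hC.sub _ hb))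
    · exact absurd ((hCid1 b hb).symm.trans h3.1) (Eo1_ne hE (hC.sub _ hb))
  obtain ⟨dβ, hdβ1, hdβ2⟩ := anchor β hβC
  obtain ⟨dβ', hdβ'1, hdβ'2⟩ := anchor β' hβ'C
  -- the target point δ
  obtain ⟨δ, hδC, hδgt⟩ := hC.unb (max (max dβ dβ') β') (max_lt (max_lt hdβ1 hdβ'1) hβ'1)
  have hδ1 : δ < o1 := hC.sub _ hδC
  -- kill Q \ Q1 at E δ
  have hkill : E δ ∉ closure (Q \ Q1) := by
    intro hmem
    have heq : Set.EqOn (fun t => R (E o1) t) (fun _ => E o1) (Q \ Q1) := fun q hq => hQ2 q hq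
    have := heq.closure (hR2 (E o1)) continuous_const hmem
    simp only at this
    rw [hCid2 δ hδC] at this
    exact Eo1_ne hE hδ1 this
  have hδQ1 : E δ ∈ closure Q1 := by
    refine mem_closure_of_dense ?_ hkill
    have : Q1 ∪ (Q \ Q1) = Q := Set.union_diff_cancel hQ1sub
    rw [this]; exact hQd
  -- the final equalizer clash
  have heq : Set.EqOn (fun t => R (E β) t) (fun t => R (E β') t) Q1 := by
    intro q hq
    simp only
    rw [hΘ2 q hq β hβΘ hβ1, hΘ2 q hq β' (hβΘ.trans hββ') hβ'1]
  have := heq.closure (hR2 (E β)) (hR2 (E β')) hδQ1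
  simp only at this
  rw [hdβ2 δ (lt_of_le_of_lt (le_max_of_le_left (le_max_left _ _)) hδgt) hδ1,
    hdβ'2 δ (lt_of_le_of_lt (le_max_of_le_left (le_max_right _ _)) hδgt) hδ1] at this
  exact absurd (hE.inj β hβ1.le β' hβ'1.le this) hββ'.ne

/-- The "both slots absorbing" case. -/
lemma AsymI (hE : ESetup E) {Q : Set X} (hQc : Q.Countable) (hQd : Dense Q)
    (R : X → X → X) (hR1 : ∀ c, Continuous fun t => R t c)
    (hR2 : ∀ c, Continuous fun t => R c t)
    {C : Set Ordinal.{u}} (hC : GoodClub C)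
    (hCa1 : ∀ γ ∈ C, R (E γ) (E o1) = E o1)
    (hCa2 : ∀ γ ∈ C, R (E o1) (E γ) = E o1)
    (hCd : ∀ γ ∈ C, R (E γ) (E γ) = E γ) : False := by
  classical
  have hXne : Nonempty X := ⟨E 0⟩
  have hQne : Q.Nonempty := hQd.nonempty
  obtain ⟨g, hg⟩ := (Set.countable_iff_exists_surjective hQne).1 hQc
  set Q1 : Set X :=
    {q | q ∈ Q ∧ ∃ θ, θ < o1 ∧ ∀ β, θ < β → β < o1 → R (E β) q = R (E o1) q} with hQ1def
  set Q2a : Set X :=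
    {q | q ∈ Q ∧ q ∉ Q1 ∧ Unb {β | β < o1 ∧ R (E β) q = E o1}} with hQ2adef
  set Q2b : Set X := {q | q ∈ Q ∧ q ∉ Q1 ∧ q ∉ Q2a} with hQ2bdef
  have hQ1sub : Q1 ⊆ Q := fun q hq => hq.1
  have hQsplit : ∀ q ∈ Q, q ∈ Q1 ∨ q ∈ Q2a ∨ q ∈ Q2b := by
    intro q hq
    by_cases h1 : q ∈ Q1
    · exact Or.inl h1
    by_cases h2 : q ∈ Q2a
    · exact Or.inr (Or.inl h2)
    · exact Or.inr (Or.inr ⟨hq, h1, h2⟩)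
  have hQ2r : ∀ q ∈ Q, q ∉ Q1 → R (E o1) q = E o1 := by
    intro q hq hq1
    have hcq : Continuous fun β : Ordinal.{u} => R (E β) q := (hR1 q).comp hE.cont
    rcases lemS hE hcq with h1 | h2 | h3
    · exact absurd ⟨hq, h1⟩ hq1
    · exact h2.1
    · exact h3.1
  have hQ2bclub : ∀ q ∈ Q2b, GoodClub {β | β < o1 ∧ R (E β) q = E β} := by
    intro q hq
    have hcq : Continuous fun β : Ordinal.{u} => R (E β) q := (hR1 q).comp hE.cont
    rcases lemS hE hcq with h1 | h2 | h3
    · exact absurd ⟨hq.1, h1⟩ hq.2.1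
    · exact absurd ⟨hq.1, hq.2.1, h2.2.unb⟩ hq.2.2
    · exact h3.2
  have hQ2aclub : ∀ q ∈ Q2a, GoodClub {β | β < o1 ∧ R (E β) q = E o1} := by
    intro q hq
    exact goodClub_eq ((hR1 q).comp hE.cont) continuous_const hq.2.2
  -- master club
  set CC : ℕ → Set Ordinal.{u} := fun i =>
    if (g i : X) ∈ Q2a then {β | β < o1 ∧ R (E β) (g i) = E o1}
    else if (g i : X) ∈ Q2b then {β | β < o1 ∧ R (E β) (g i) = E β}
    else Set.Iio o1 with hCCdef
  have hCCgc : ∀ i, GoodClub (CC i) := by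
    intro i
    simp only [hCCdef]
    by_cases h2 : (g i : X) ∈ Q2a
    · rw [if_pos h2]; exact hQ2aclub _ h2
    · rw [if_neg h2]
      by_cases h3 : (g i : X) ∈ Q2b
      · rw [if_pos h3]; exact hQ2bclub _ h3
      · rw [if_neg h3]; exact GoodClub.iio
  set K : Set Ordinal.{u} := C ∩ ⋂ i, CC i with hKdef
  have hK : GoodClub K := hC.inter (GoodClub.iInter _ hCCgc)
  have hKC : K ⊆ C := Set.inter_subset_left
  have hKmem2a : ∀ β ∈ K, ∀ q ∈ Q2a, R (E β) q = E o1 := by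
    intro β hβ q hq
    obtain ⟨i, hi⟩ := hg ⟨q, hq.1⟩
    have hβi : β ∈ CC i := Set.mem_iInter.1 hβ.2 i
    have hgi : (g i : X) = q := by rw [hi]
    rw [hCCdef] at hβi
    simp only [hgi] at hβi
    rw [if_pos hq] at hβi
    exact hβi.2
  have hKmem2b : ∀ β ∈ K, ∀ q ∈ Q2b, R (E β) q = E β := by
    intro β hβ q hq
    obtain ⟨i, hi⟩ := hg ⟨q, hq.1⟩
    have hβi : β ∈ CC i := Set.mem_iInter.1 hβ.2 i
    have hgi : (g i : X) = q := by rw [hi]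
    rw [hCCdef] at hβi
    simp only [hgi] at hβi
    rw [if_neg hq.2.2, if_pos hq] at hβi
    exact hβi.2
  -- uniform threshold for Q1
  have hθ : ∃ Θ, Θ < o1 ∧ ∀ q ∈ Q1, ∀ β, Θ < β → β < o1 → R (E β) q = R (E o1) q := by
    set φ : X → Ordinal.{u} := fun q =>
      if hq : ∃ θ, θ < o1 ∧ ∀ β, θ < β → β < o1 → R (E β) q = R (E o1) q then
        Classical.choose hq else 0 with hφ
    have hφlt : ∀ q, φ q < o1 := by
      intro q
      by_cases hq : ∃ θ, θ < o1 ∧ ∀ β, θ < β → β < o1 → R (E β) q = R (E o1) q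
      · simp only [hφ, dif_pos hq]; exact (Classical.choose_spec hq).1
      · simp only [hφ, dif_neg hq]; exact o1_pos
    obtain ⟨Θ, hΘ1, hΘ2⟩ := countable_set_sup_lt (hQc.image φ)
      (by rintro x ⟨y, -, rfl⟩; exact hφlt y)
    refine ⟨Θ, hΘ1, fun q hq β h1 h2 => ?_⟩
    have hex := hq.2
    have hspec := Classical.choose_spec hex
    have heq2 : φ q = Classical.choose hex := by simp only [hφ, dif_pos hex]
    refine hspec.2 β ?_ h2
    calc Classical.choose hex = φ q := heq2.symm
    _ ≤ Θ := hΘ2 _ ⟨q, hQ1sub hq, rfl⟩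
    _ < β := h1
  obtain ⟨Θ, hΘ1, hΘ2⟩ := hθ
  by_cases hcase : ∃ β', β' ∈ K ∧ Θ < β' ∧ ¬ Unb {γ | γ < o1 ∧ R (E β') (E γ) = E o1}
  · -- a neutral anchor exists
    obtain ⟨β', hβ'K, hβ'Θ, hβ'n⟩ := hcase
    have hβ'1 : β' < o1 := hK.sub _ hβ'K
    have hKb' : GoodClub {γ | γ < o1 ∧ R (E β') (E γ) = E γ} := by
      have hcb : Continuous fun γ : Ordinal.{u} => R (E β') (E γ) := (hR2 _).comp hE.cont
      rcases lemS hE hcb with h1 | h2 | h3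
      · exfalso
        apply hβ'n
        obtain ⟨θ, hθ1, hθ2⟩ := h1
        intro b hb
        refine ⟨max θ b + 1, ⟨o1_isLimit.succ_lt (max_lt hθ1 hb), ?_⟩,
          lt_of_le_of_lt (le_max_right _ _) (lt_add_one _)⟩
        rw [hθ2 _ (lt_of_le_of_lt (le_max_left _ _) (lt_add_one _))
          (o1_isLimit.succ_lt (max_lt hθ1 hb))]
        exact hCa1 β' (hKC hβ'K)
      · exact absurd h2.2.unb hβ'n
      · exact h3.2
    obtain ⟨δ, hδmem, hδgt⟩ := (hK.inter hKb').unb (max Θ β') (max_lt hΘ1 hβ'1)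
    obtain ⟨hδK, hδn⟩ := hδmem
    have hδ1 : δ < o1 := hK.sub _ hδK
    have hδβ' : β' < δ := lt_of_le_of_lt (le_max_right _ _) hδgt
    -- kill Q2a and Q2b at E δ
    have hkilla : E δ ∉ closure Q2a := by
      intro hmem
      have heq : Set.EqOn (fun t => R (E β') t) (fun _ => E o1) Q2a :=
        fun q hq => hKmem2a β' hβ'K q hq
      have := heq.closure (hR2 (E β')) continuous_const hmem
      simp only at this
      rw [hδn.2] at this
      exact Eo1_ne hE hδ1 this
    have hkillb : E δ ∉ closure Q2b := by
      intro hmem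
      have heq : Set.EqOn (fun t => R (E β') t) (fun _ => E β') Q2b :=
        fun q hq => hKmem2b β' hβ'K q hq
      have := heq.closure (hR2 (E β')) continuous_const hmem
      simp only at this
      rw [hδn.2] at this
      exact absurd (hE.inj δ hδ1.le β' hβ'1.le this) hδβ'.ne'
    have hδQ1 : E δ ∈ closure Q1 := by
      have hsub2 : Q ⊆ Q1 ∪ (Q2a ∪ Q2b) := by
        intro q hq
        rcases hQsplit q hq with h | h | h
        · exact Or.inl h
        · exact Or.inr (Or.inl h)
        · exact Or.inr (Or.inr h)
      have hd : Dense (Q1 ∪ (Q2a ∪ Q2b)) := hQd.mono hsub2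
      refine mem_closure_of_dense hd ?_
      rw [closure_union]
      rintro (h | h)
      · exact hkilla h
      · exact hkillb h
    have heq : Set.EqOn (fun t => R (E o1) t) (fun t => R (E β') t) Q1 := by
      intro q hq
      simp only
      rw [hΘ2 q hq β' hβ'Θ hβ'1]
    have := heq.closure (hR2 (E o1)) (hR2 (E β')) hδQ1
    simp only at this
    rw [hCa2 δ (hKC hδK), hδn.2] at this
    exact Eo1_ne hE hδ1 this.symm
  · -- every anchor is absorbing: diagonal recursion
    push_neg at hcase
    set inv : Ordinal.{u} × Set Ordinal.{u} → Prop := fun p =>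
      (p.1 ∈ K ∧ Θ < p.1) ∧ GoodClub p.2 ∧
      p.2 ⊆ (K ∩ {γ | p.1 < γ ∧ γ < o1}) ∩ {γ | γ < o1 ∧ R (E p.1) (E γ) = E o1}
      with hinvdef
    have hnew : ∀ b ∈ K, Θ < b →
        GoodClub ((K ∩ {γ | b < γ ∧ γ < o1}) ∩ {γ | γ < o1 ∧ R (E b) (E γ) = E o1}) := by
      intro b hb hΘb
      have h1 : GoodClub {γ | γ < o1 ∧ R (E b) (E γ) = E o1} :=
        goodClub_eq ((hR2 _).comp hE.cont) continuous_const (hcase b hb hΘb)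
      exact (hK.inter (goodClub_tail (hK.sub _ hb))).inter h1
    set step : Ordinal.{u} × Set Ordinal.{u} → Ordinal.{u} × Set Ordinal.{u} := fun p =>
      if h : inv p then
        (Classical.choose (h.2.1.unb 0 o1_pos),
          p.2 ∩ ({γ | Classical.choose (h.2.1.unb 0 o1_pos) < γ ∧ γ < o1} ∩
            {γ | γ < o1 ∧ R (E (Classical.choose (h.2.1.unb 0 o1_pos))) (E γ) = E o1}))
      else p with hstepdef
    have hstep : ∀ p, inv p → inv (step p) ∧ (step p).1 ∈ p.2 ∧ (step p).2 ⊆ p.2 := by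
      intro p hp
      have hsp := Classical.choose_spec (hp.2.1.unb 0 o1_pos)
      set γn := Classical.choose (hp.2.1.unb 0 o1_pos) with hγn
      have hst : step p = (γn, p.2 ∩ ({γ | γn < γ ∧ γ < o1} ∩
          {γ | γ < o1 ∧ R (E γn) (E γ) = E o1})) := by
        simp only [hstepdef]
        rw [dif_pos hp]
      have hγnp : γn ∈ p.2 := hsp.1
      have hγnK : γn ∈ K := (hp.2.2 hγnp).1.1
      have hγnΘ : Θ < γn := hp.1.2.trans (hp.2.2 hγnp).1.2.1
      have hγn1 : γn < o1 := hK.sub _ hγnK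
      constructor
      · rw [hst]
        refine ⟨⟨hγnK, hγnΘ⟩, ?_, ?_⟩
        · exact hp.2.1.inter ((goodClub_tail hγn1).inter
            (goodClub_eq ((hR2 _).comp hE.cont) continuous_const (hcase γn hγnK hγnΘ)))
        · intro γ hγ
          exact ⟨⟨(hp.2.2 hγ.1).1.1, hγ.2.1⟩, hγ.2.2⟩
      · rw [hst]
        exact ⟨hγnp, fun γ hγ => hγ.1⟩
    -- base point
    obtain ⟨β0, hβ0K, hβ0Θ⟩ := hK.unb Θ hΘ1
    set p0 : Ordinal.{u} × Set Ordinal.{u} :=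
      (β0, (K ∩ {γ | β0 < γ ∧ γ < o1}) ∩ {γ | γ < o1 ∧ R (E β0) (E γ) = E o1}) with hp0
    have hinv0 : inv p0 := ⟨⟨hβ0K, hβ0Θ⟩, hnew β0 hβ0K hβ0Θ, fun γ hγ => hγ⟩
    set S : ℕ → Ordinal.{u} × Set Ordinal.{u} := fun k => Nat.rec p0 (fun _ ih => step ih) k
      with hS
    have hSs : ∀ k, S (k+1) = step (S k) := fun k => rfl
    have hSinv : ∀ k, inv (S k) := by
      intro k
      induction k with
      | zero => exact hinv0
      | succ k ih => rw [hSs]; exact (hstep _ ih).1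
    have hSnext : ∀ k, (S (k+1)).1 ∈ (S k).2 ∧ (S (k+1)).2 ⊆ (S k).2 := by
      intro k
      rw [hSs]
      exact ⟨(hstep _ (hSinv k)).2.1, (hstep _ (hSinv k)).2.2⟩
    have hchain : ∀ j k, j ≤ k → (S k).2 ⊆ (S j).2 := by
      intro j k hjk
      induction k with
      | zero => rw [Nat.le_zero.1 hjk]
      | succ k ih =>
        rcases Nat.lt_or_ge j (k+1) with h | h
        · exact ((hSnext k).2).trans (ih (Nat.lt_succ_iff.1 h))
        · rw [Nat.le_antisymm hjk h]
    set β : ℕ → Ordinal.{u} := fun k => (S k).1 with hβdef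
    have hβK : ∀ k, β k ∈ K := fun k => (hSinv k).1.1
    have hβ1 : ∀ k, β k < o1 := fun k => hK.sub _ (hβK k)
    have hβmem : ∀ j k, j ≤ k → β (k+1) ∈ (S j).2 := by
      intro j k hjk
      exact hchain j k hjk (hSnext k).1
    have hβmono : StrictMono β := by
      apply strictMono_nat_of_lt_succ
      intro k
      exact ((hSinv k).2.2 (hβmem k k le_rfl)).1.2.1
    set βs : Ordinal.{u} := ⨆ k, β k with hβs
    have hβslt : βs < o1 := seq_sup_lt β hβ1
    have hβsK : βs ∈ K := hK.closed β hβK hβmono.monotone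
    have hβstop : ∀ j, R (E (β j)) (E βs) = E o1 := by
      intro j
      have hy : ∀ k : ℕ, β (k + j + 1) ∈ (S j).2 := by
        intro k
        exact hβmem j (k + j) (Nat.le_add_left j k)
      have hym : Monotone fun k => β (k + j + 1) := by
        intro a b hab
        exact hβmono.monotone (Nat.succ_le_succ (Nat.add_le_add_right hab j))
      have hsup : (⨆ k, β (k + j + 1)) = βs := by
        apply le_antisymm
        · exact iSup_le_iSup_of_lt (fun i => ⟨i + j + 1, le_rfl⟩)
        · exact iSup_le_iSup_of_lt (fun i => ⟨i, hβmono.monotone (Nat.le_add_right i (j+1))⟩)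
      have hmem : βs ∈ (S j).2 := by
        rw [← hsup]
        exact (hSinv j).2.1.closed _ hy hym
      exact ((hSinv j).2.2 hmem).2.2
    have htd : Filter.Tendsto (fun k => R (E (β k)) (E βs)) Filter.atTop
        (nhds (R (E βs) (E βs))) := by
      have h1 : Filter.Tendsto β Filter.atTop (nhds βs) := tendsto_seq_iSup β hβmono.monotone
      have h2 : Filter.Tendsto (fun k => E (β k)) Filter.atTop (nhds (E βs)) :=
        ((hE.cont.tendsto βs).comp h1)
      exact ((hR1 (E βs)).tendsto (E βs)).comp h2
    have hconst : (fun k => R (E (β k)) (E βs)) = fun _ => E o1 := funext hβstop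
    rw [hconst] at htd
    have : R (E βs) (E βs) = E o1 := tendsto_nhds_unique htd tendsto_const_nhds
    rw [hCd βs (hKC hβsK)] at this
    exact Eo1_ne hE hβslt this

end Asym

end Top

section Mu
variable {X : Type*} [TopologicalSpace X] {n : ℕ}

/-- two-block vector -/
def blk (n : ℕ) (k : ℕ) (x y : X) : Fin n → X := fun i => if (i : ℕ) < k then x else y

/-- three-block vector -/
def trip (n : ℕ) (a b : ℕ) (x y z : X) : Fin n → X :=
  fun i => if (i : ℕ) < a then x else if (i : ℕ) < b then y else z

variable {μ : (Fin n → X) → X} (hdc : DiagCts μ) (hm : IsNMean μ)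

/-- continuity of "Option-pattern" sections -/
lemma sec_cont (hdc : DiagCts μ) (c : Fin n → Option X) :
    Continuous fun t => μ (fun i => (c i).getD t) := by
  apply hdc (fun i t => (c i).getD t)
  intro i
  cases hci : c i with
  | none => exact Or.inr (fun x => by simp)
  | some a => exact Or.inl ⟨a, fun x => by simp⟩

lemma blk_diag (hm : IsNMean μ) (k : ℕ) (x : X) : μ (blk n k x x) = x := by
  have : blk n k x x = fun _ => x := by
    funext i
    simp only [blk]
    split <;> rfl
  rw [this]
  exact hm.1 x

lemma blk_rev (hm : IsNMean μ) (k : ℕ) (hk : k ≤ n) (x y : X) :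
    μ (blk n k x y) = μ (blk n (n - k) y x) := by
  have h : blk n (n-k) y x ∘ (Fin.revPerm : Equiv.Perm (Fin n)) = blk n k x y := by
    funext i
    simp only [Function.comp, blk, Fin.revPerm_apply, Fin.val_rev]
    have hi : (i : ℕ) < n := i.2
    by_cases h : (i : ℕ) < k
    · rw [if_pos h, if_neg (by omega)]
    · rw [if_neg h, if_pos (by omega)]
  calc μ (blk n k x y) = μ (blk n (n-k) y x ∘ (Fin.revPerm : Equiv.Perm (Fin n))) := by rw [h]
  _ = μ (blk n (n-k) y x) := hm.2 _ _

lemma trip_collapse12 (a b : ℕ) (hab : a ≤ b) (x z : X) :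
    trip n a b x x z = blk n b x z := by
  funext i
  simp only [trip, blk]
  by_cases h : (i:ℕ) < a
  · rw [if_pos h, if_pos (lt_of_lt_of_le h hab)]
  · rw [if_neg h]

lemma trip_collapse23 (a b : ℕ) (hab : a ≤ b) (x z : X) :
    trip n a b x z z = blk n a x z := by
  funext i
  simp only [trip, blk]
  by_cases h : (i:ℕ) < a
  · rw [if_pos h, if_pos h]
  · rw [if_neg h, if_neg h]
    split <;> rfl

/-- swapping slots 0 and 1 -/
lemma trip_swap01 (hm : IsNMean μ) (hn : 2 ≤ n) (x z : X) :
    μ (trip n 1 2 z x z) = μ (blk n 1 x z) := by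
  set i0 : Fin n := ⟨0, by omega⟩ with hi0def
  set i1 : Fin n := ⟨1, by omega⟩ with hi1def
  have h : blk n 1 x z ∘ (Equiv.swap i0 i1) = trip n 1 2 z x z := by
    funext i
    simp only [Function.comp, blk, trip]
    by_cases hv0 : i = i0
    · subst hv0
      rw [Equiv.swap_apply_left, hi0def, hi1def]
      norm_num
    · by_cases hv1 : i = i1
      · subst hv1
        rw [Equiv.swap_apply_right, hi0def, hi1def]
        norm_num
      · rw [Equiv.swap_apply_of_ne_of_ne hv0 hv1]
        have h0 : (i : ℕ) ≠ 0 := by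
          intro h; apply hv0; apply Fin.ext; rw [h, hi0def]
        have h1 : (i : ℕ) ≠ 1 := by
          intro h; apply hv1; apply Fin.ext; rw [h, hi1def]
        rw [if_neg (by omega), if_neg (by omega), if_neg (by omega)]
  calc μ (trip n 1 2 z x z) = μ (blk n 1 x z ∘ (Equiv.swap i0 i1)) := by rw [h]
  _ = μ (blk n 1 x z) := hm.2 _ _

/-- swapping the two blocks `[0,m)` and `[m,2m)` when `n = 2m+1` -/
lemma trip_blockswap (hm : IsNMean μ) (m : ℕ) (hnm : n = 2*m+1) (x y z : X) :
    μ (trip n m (2*m) x y z) = μ (trip n m (2*m) y x z) := by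
  set f : Fin n → Fin n := fun i =>
      if h : (i:ℕ) < m then (⟨(i:ℕ) + m, by omega⟩ : Fin n)
      else if h2 : (i:ℕ) < 2*m then (⟨(i:ℕ) - m, by omega⟩ : Fin n) else i with hfdef
  have hinv : Function.Involutive f := by
    intro i
    have hi : (i:ℕ) < n := i.2
    simp only [hfdef]
    by_cases h1 : (i:ℕ) < m
    · rw [dif_pos h1, dif_neg (by simp only [Fin.val_mk]; omega),
        dif_pos (by simp only [Fin.val_mk]; omega)]
      apply Fin.ext
      simp only [Fin.val_mk]
      omega
    · rw [dif_neg h1]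
      by_cases h2 : (i:ℕ) < 2*m
      · rw [dif_pos h2, dif_pos (by simp only [Fin.val_mk]; omega)]
        apply Fin.ext
        simp only [Fin.val_mk]
        omega
      · rw [dif_neg h2, dif_neg h1, dif_neg h2]
  set σ : Equiv.Perm (Fin n) := hinv.toPerm _ with hσ
  have h : trip n m (2*m) y x z ∘ σ = trip n m (2*m) x y z := by
    funext i
    have hi : (i:ℕ) < n := i.2
    simp only [Function.comp, hσ, Function.Involutive.coe_toPerm, hfdef]
    by_cases h1 : (i:ℕ) < m
    · rw [dif_pos h1]
      simp only [trip, Fin.val_mk]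
      rw [if_neg (by omega), if_pos (by omega), if_pos h1]
    · rw [dif_neg h1]
      by_cases h2 : (i:ℕ) < 2*m
      · rw [dif_pos h2]
        simp only [trip, Fin.val_mk]
        rw [if_pos (by omega), if_neg h1, if_pos h2]
      · rw [dif_neg h2]
        simp only [trip]
        rw [if_neg h1, if_neg h2, if_neg (by omega), if_neg (by omega)]
  calc μ (trip n m (2*m) x y z) = μ (trip n m (2*m) y x z ∘ σ) := by rw [h]
  _ = μ (trip n m (2*m) y x z) := hm.2 _ _

end Mu


section Cont
variable {X : Type*} [TopologicalSpace X] {n : ℕ} {μ : (Fin n → X) → X}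

lemma cont_blk1 (hdc : DiagCts μ) (k : ℕ) (c : X) : Continuous fun t => μ (blk n k t c) := by
  have heq : (fun t => μ (blk n k t c)) = fun t =>
      μ (fun i => ((fun i : Fin n => if (i:ℕ) < k then (none : Option X) else some c) i).getD t) := by
    funext t
    congr 1
    funext i
    simp only [blk]
    by_cases h : (i:ℕ) < k
    · rw [if_pos h, if_pos h]; rfl
    · rw [if_neg h, if_neg h]; rfl
  rw [heq]
  exact sec_cont hdc _

lemma cont_blk2 (hdc : DiagCts μ) (k : ℕ) (c : X) : Continuous fun t => μ (blk n k c t) := by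
  have heq : (fun t => μ (blk n k c t)) = fun t =>
      μ (fun i => ((fun i : Fin n => if (i:ℕ) < k then some c else (none : Option X)) i).getD t) := by
    funext t
    congr 1
    funext i
    simp only [blk]
    by_cases h : (i:ℕ) < k
    · rw [if_pos h, if_pos h]; rfl
    · rw [if_neg h, if_neg h]; rfl
  rw [heq]
  exact sec_cont hdc _

lemma cont_trip1 (hdc : DiagCts μ) (a b : ℕ) (c z : X) :
    Continuous fun t => μ (trip n a b t c z) := by
  have heq : (fun t => μ (trip n a b t c z)) = fun t =>
      μ (fun i => ((fun i : Fin n => if (i:ℕ) < a then (none : Option X)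
        else if (i:ℕ) < b then some c else some z) i).getD t) := by
    funext t
    congr 1
    funext i
    simp only [trip]
    by_cases h : (i:ℕ) < a
    · rw [if_pos h, if_pos h]; rfl
    · rw [if_neg h, if_neg h]
      by_cases h2 : (i:ℕ) < b
      · rw [if_pos h2, if_pos h2]; rfl
      · rw [if_neg h2, if_neg h2]; rfl
  rw [heq]
  exact sec_cont hdc _

lemma cont_trip2 (hdc : DiagCts μ) (a b : ℕ) (c z : X) :
    Continuous fun t => μ (trip n a b c t z) := by
  have heq : (fun t => μ (trip n a b c t z)) = fun t =>
      μ (fun i => ((fun i : Fin n => if (i:ℕ) < a then some c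
        else if (i:ℕ) < b then (none : Option X) else some z) i).getD t) := by
    funext t
    congr 1
    funext i
    simp only [trip]
    by_cases h : (i:ℕ) < a
    · rw [if_pos h, if_pos h]; rfl
    · rw [if_neg h, if_neg h]
      by_cases h2 : (i:ℕ) < b
      · rw [if_pos h2, if_pos h2]; rfl
      · rw [if_neg h2, if_neg h2]; rfl
  rw [heq]
  exact sec_cont hdc _

end Cont

section Main

variable {X : Type v} [TopologicalSpace X] [T2Space X]

theorem main_aux [TopologicalSpace.SeparableSpace X]
    (A : Set X) (hAcc : (Aᶜ).Countable)
    (φ : A ≃ₜ (Set.Iic (ω_ 1) : Set Ordinal.{u}))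
    (n : ℕ) (hn : 2 ≤ n) (μ : (Fin n → X) → X)
    (hdc : DiagCts μ) (hm : IsNMean μ) : False := by
  classical
  -- the embedded copy of [0, ω₁]
  set E : Ordinal.{u} → X :=
    fun o => ((φ.symm ⟨min o (ω_ 1), by simp⟩ : A) : X) with hEdef
  have hEc : Continuous E := by
    apply continuous_subtype_val.comp
    apply φ.symm.continuous.comp
    exact Continuous.subtype_mk (continuous_id.min continuous_const) _
  have hEtop : ∀ o, (o1 : Ordinal.{u}) ≤ o → E o = E o1 := by
    intro o ho
    simp only [hEdef]
    congr 2
    exact Subtype.ext (by simp [min_eq_right ho])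
  have hEinj : ∀ a, a ≤ (o1 : Ordinal.{u}) → ∀ b, b ≤ o1 → E a = E b → a = b := by
    intro a ha b hb h
    simp only [hEdef] at h
    have h2 := φ.symm.injective (Subtype.coe_injective h)
    have h3 := congrArg Subtype.val h2
    simpa [min_eq_left ha, min_eq_left hb] using h3
  have hrange : Set.range E = A := by
    ext x
    constructor
    · rintro ⟨o, rfl⟩
      exact (φ.symm _).2
    · intro hx
      refine ⟨(φ ⟨x, hx⟩ : (Set.Iic (ω_ 1) : Set Ordinal.{u})).1, ?_⟩
      simp only [hEdef]
      have harg : (⟨min ((φ ⟨x, hx⟩ : (Set.Iic (ω_ 1) : Set Ordinal.{u})).1) (ω_ 1),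
          by simp⟩ : (Set.Iic (ω_ 1) : Set Ordinal.{u})) = φ ⟨x, hx⟩ :=
        Subtype.ext (by simp [min_eq_left (Set.mem_Iic.1 (φ ⟨x, hx⟩).2)])
      rw [harg, Homeomorph.symm_apply_apply]
  have heS : ESetup E := ⟨hEc, hEtop, hEinj, by rw [hrange]; exact hAcc⟩
  obtain ⟨D, hDc, hDd⟩ := TopologicalSpace.exists_countable_dense X
  -- block data
  have tdata : ∀ j : ℕ,
      (∃ C, GoodClub C ∧ ∀ γ ∈ C, μ (blk n j (E γ) (E o1)) = E γ) ∨
      (∃ C, GoodClub C ∧ ∀ γ ∈ C, μ (blk n j (E γ) (E o1)) = E o1) := by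
    intro j
    have hcont : Continuous fun γ : Ordinal.{u} => μ (blk n j (E γ) (E o1)) :=
      (cont_blk1 hdc j (E o1)).comp hEc
    have htop : μ (blk n j (E o1) (E o1)) = E o1 := blk_diag hm j (E o1)
    rcases lemS heS hcont with ⟨θ, hθ1, hθ2⟩ | ⟨-, h2⟩ | ⟨-, h2⟩
    · right
      exact ⟨_, goodClub_tail hθ1, fun γ hγ => (hθ2 γ hγ.1 hγ.2).trans htop⟩
    · right
      exact ⟨_, h2, fun γ hγ => hγ.2⟩
    · left
      exact ⟨_, h2, fun γ hγ => hγ.2⟩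
  rcases Nat.even_or_odd n with he | ho
  · -- n even : use the half/half split
    obtain ⟨m, hm2⟩ := he
    have hswap : ∀ z : X, μ (blk n m (E o1) z) = μ (blk n m z (E o1)) := by
      intro z
      have h := blk_rev hm m (by omega) (E o1) z
      have hnm : n - m = m := by omega
      rw [hnm] at h
      exact h
    rcases tdata m with ⟨C, hC, hval⟩ | ⟨C, hC, hval⟩
    · exact AsymII heS hDc hDd (fun x y => μ (blk n m x y))
        (fun c => cont_blk1 hdc m c) (fun c => cont_blk2 hdc m c) hC
        (fun γ hγ => hval γ hγ) (fun γ hγ => by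
          show μ (blk n m (E o1) (E γ)) = E γ
          rw [hswap]; exact hval γ hγ)
    · exact AsymI heS hDc hDd (fun x y => μ (blk n m x y))
        (fun c => cont_blk1 hdc m c) (fun c => cont_blk2 hdc m c) hC
        (fun γ hγ => hval γ hγ) (fun γ hγ => by
          show μ (blk n m (E o1) (E γ)) = E o1
          rw [hswap]; exact hval γ hγ)
        (fun γ hγ => blk_diag hm m (E γ))
  · -- n odd
    obtain ⟨m, hm2⟩ := ho
    have hm1 : 1 ≤ m := by omega
    rcases tdata 1 with ⟨C1, hC1, h1⟩ | ⟨C1, hC1, h1⟩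
    · -- t₁ = id : the gadget μ(x, y, Ω, ..., Ω)
      have hcol : ∀ z : X, trip n 1 2 z (E o1) (E o1) = blk n 1 z (E o1) :=
        fun z => trip_collapse23 1 2 (by omega) z (E o1)
      exact AsymII heS hDc hDd (fun x y => μ (trip n 1 2 x y (E o1)))
        (fun c => cont_trip1 hdc 1 2 c (E o1)) (fun c => cont_trip2 hdc 1 2 c (E o1)) hC1
        (fun γ hγ => by
          show μ (trip n 1 2 (E γ) (E o1) (E o1)) = E γ
          rw [hcol (E γ)]; exact h1 γ hγ)
        (fun γ hγ => by
          show μ (trip n 1 2 (E o1) (E γ) (E o1)) = E γ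
          rw [trip_swap01 hm hn (E γ) (E o1)]
          exact h1 γ hγ)
    · rcases tdata (n-1) with ⟨C2, hC2, h2⟩ | ⟨C2, hC2, h2⟩
      · -- t_{n-1} = id : the symmetric gadget μ(x^m, y^m, Ω)
        have hn1 : n - 1 = 2*m := by omega
        have hcol1 : ∀ z : X, trip n m (2*m) z (E o1) (E o1) = blk n m z (E o1) :=
          fun z => trip_collapse23 m (2*m) (by omega) z (E o1)
        have hdiag : ∀ γ ∈ C2, μ (trip n m (2*m) (E γ) (E γ) (E o1)) = E γ := by
          intro γ hγ
          rw [trip_collapse12 m (2*m) (by omega) (E γ) (E o1), ← hn1]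
          exact h2 γ hγ
        have hswap : ∀ z : X,
            μ (trip n m (2*m) (E o1) z (E o1)) = μ (trip n m (2*m) z (E o1) (E o1)) :=
          fun z => trip_blockswap hm m hm2 (E o1) z (E o1)
        rcases tdata m with ⟨C3, hC3, h3⟩ | ⟨C3, hC3, h3⟩
        · exact AsymII heS hDc hDd (fun x y => μ (trip n m (2*m) x y (E o1)))
            (fun c => cont_trip1 hdc m (2*m) c (E o1))
            (fun c => cont_trip2 hdc m (2*m) c (E o1)) hC3
            (fun γ hγ => by
              show μ (trip n m (2*m) (E γ) (E o1) (E o1)) = E γ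
              rw [hcol1 (E γ)]; exact h3 γ hγ)
            (fun γ hγ => by
              show μ (trip n m (2*m) (E o1) (E γ) (E o1)) = E γ
              rw [hswap (E γ), hcol1 (E γ)]; exact h3 γ hγ)
        · exact AsymI heS hDc hDd (fun x y => μ (trip n m (2*m) x y (E o1)))
            (fun c => cont_trip1 hdc m (2*m) c (E o1))
            (fun c => cont_trip2 hdc m (2*m) c (E o1)) (hC3.inter hC2)
            (fun γ hγ => by
              show μ (trip n m (2*m) (E γ) (E o1) (E o1)) = E o1
              rw [hcol1 (E γ)]; exact h3 γ hγ.1)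
            (fun γ hγ => by
              show μ (trip n m (2*m) (E o1) (E γ) (E o1)) = E o1
              rw [hswap (E γ), hcol1 (E γ)]; exact h3 γ hγ.1)
            (fun γ hγ => hdiag γ hγ.2)
      · -- t₁ = Ω and t_{n-1} = Ω
        exact AsymI heS hDc hDd (fun x y => μ (blk n 1 x y))
          (fun c => cont_blk1 hdc 1 c) (fun c => cont_blk2 hdc 1 c) (hC1.inter hC2)
          (fun γ hγ => h1 γ hγ.1)
          (fun γ hγ => by
            show μ (blk n 1 (E o1) (E γ)) = E o1
            rw [blk_rev hm 1 (by omega) (E o1) (E γ)]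
            exact h2 γ hγ.2)
          (fun γ hγ => blk_diag hm 1 (E γ))

end Main

end NoMean

open Set Filter Cardinal NoMean in
theorem no_diag_cts_n_mean (X : Type*) [TopologicalSpace X] [T2Space X]
    [TopologicalSpace.SeparableSpace X]
    (A : Set X) (hAcc : (Aᶜ).Countable)
    (hA : Nonempty (A ≃ₜ (Set.Iic (ω_ 1) : Set Ordinal))) :
    ∀ n : ℕ, 2 ≤ n → ¬ ∃ μ : (Fin n → X) → X, DiagCts μ ∧ IsNMean μ := by
  intro n hn hex
  obtain ⟨μ, hdc, hm⟩ := hex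
  obtain ⟨φ⟩ := hA
  exact NoMean.main_aux A hAcc φ n hn μ hdc hm
end

section
/- If a separable Hausdorff topological space X contains a cocountable subset homeomorphic to [0, ω₁], then X admits no separately continuous almost 2-mean, where an almost 2-mean is a symmetric map μ : X² → X such that the set {x ∈ X : μ(x,x) ≠ x} is at most countable. -/
open Ordinal Topology Set Filter Cardinal

universe v

namespace NoAMeanAux

/-- A bound for countable sets of ordinals below `ω₁`. -/
lemma csup_lt {s : Set Ordinal.{v}} (hs : s.Countable) (h : ∀ β ∈ s, β < ω_ 1) :
    ∃ δ, δ < ω_ 1 ∧ ∀ β ∈ s, β ≤ δ := by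
  rcases s.eq_empty_or_nonempty with rfl | hne
  · exact ⟨0, omega_pos 1, by simp⟩
  · obtain ⟨f, rfl⟩ := hs.exists_eq_range hne
    refine ⟨iSup f, ?_, fun β hβ => ?_⟩
    · have := Ordinal.iSup_lt_omega_one (f := f) (fun n => h _ (mem_range_self n))
      exact this
    · obtain ⟨n, rfl⟩ := hβ
      exact le_ciSup (Ordinal.bddAbove_range f) n

lemma countable_Iic {β : Ordinal.{v}} (h : β < ω_ 1) : (Set.Iic β).Countable := by
  have hsub : Set.Iic β ⊆ Set.Iio (β + 1) := fun γ hγ => lt_of_le_of_lt hγ (lt_add_one β)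
  refine Set.Countable.mono hsub ?_
  rw [countable_iff_lt_aleph_one, Ordinal.mk_Iio_ordinal, lift_lt_aleph_one,
    ← Cardinal.lt_ord, ord_aleph]
  rw [Ordinal.add_one_eq_succ]
  exact (isSuccLimit_omega 1).succ_lt h

lemma lub_lt {a : ℕ → Ordinal.{v}} {l : Ordinal.{v}} (h : ∀ n, a n < ω_ 1)
    (hl : IsLUB (Set.range a) l) : l < ω_ 1 := by
  have h2 : IsLUB (Set.range a) (iSup a) :=
    isLUB_csSup (Set.range_nonempty a) (Ordinal.bddAbove_range a)
  rw [hl.unique h2]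
  have := Ordinal.iSup_lt_omega_one (f := a) (fun n => h n)
  exact this

/-- An ω-club: a subset of `Iio ω₁`, unbounded, and closed under countable suprema. -/
def Club (S : Set Ordinal.{v}) : Prop :=
  (∀ α ∈ S, α < ω_ 1) ∧
  (∀ β < (ω_ 1 : Ordinal.{v}), ∃ α ∈ S, β < α) ∧
  (∀ a : ℕ → Ordinal.{v}, (∀ n, a n ∈ S) → Monotone a →
    ∀ l, IsLUB (Set.range a) l → l ∈ S)

lemma squeeze {a b : ℕ → Ordinal.{v}} {l : Ordinal.{v}} (hmono : Monotone a)
    (hlub : IsLUB (Set.range a) l) (h1 : ∀ n, a n < b n) (h2 : ∀ n, b n ≤ l) :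
    Tendsto b atTop (𝓝 l) := by
  rw [tendsto_order]
  constructor
  · intro c hc
    obtain ⟨y, ⟨n, rfl⟩, hy⟩ : ∃ y ∈ Set.range a, c < y := by
      by_contra hcon
      push_neg at hcon
      exact absurd (hlub.2 fun y hy => hcon y hy) (not_le.2 hc)
    exact Filter.eventually_atTop.2
      ⟨n, fun m hm => hy.trans_le ((hmono hm).trans (h1 m).le)⟩
  · intro c hc
    exact Filter.Eventually.of_forall fun n => (h2 n).trans_lt hc

lemma club_iInter (T : ℕ → Set Ordinal.{v}) (h : ∀ n, Club (T n)) :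
    Club (⋂ n, T n) := by
  refine ⟨fun α hα => (h 0).1 α (Set.mem_iInter.1 hα 0), ?_, ?_⟩
  · -- unboundedness
    intro β hβ
    -- choice of "next element of T n above γ"
    have hw : ∀ (n : ℕ) (γ : Ordinal.{v}), ∃ t, γ < ω_ 1 → t ∈ T n ∧ γ < t ∧ t < ω_ 1 := by
      intro n γ
      by_cases hγ : γ < ω_ 1
      · obtain ⟨t, ht, hγt⟩ := (h n).2.1 γ hγ
        exact ⟨t, fun _ => ⟨ht, hγt, (h n).1 t ht⟩⟩
      · exact ⟨0, fun hc => absurd hc hγ⟩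
    choose w hw using hw
    -- the diagonal sequence
    let d : ℕ → Ordinal.{v} := fun m => Nat.rec (β + 1)
      (fun m dm => max (dm + 1) ((Finset.range (m + 1)).sup fun n => w n dm)) m
    have hd0 : d 0 = β + 1 := rfl
    have hdsucc : ∀ m, d (m + 1) = max (d m + 1) ((Finset.range (m + 1)).sup fun n => w n (d m)) :=
      fun m => rfl
    have hdlt : ∀ m, d m < ω_ 1 := by
      intro m
      induction m with
      | zero =>
        rw [hd0, Ordinal.add_one_eq_succ]
        exact (isSuccLimit_omega 1).succ_lt hβ
      | succ m ih =>
        rw [hdsucc]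
        refine max_lt ?_ ?_
        · rw [Ordinal.add_one_eq_succ]; exact (isSuccLimit_omega 1).succ_lt ih
        · refine Finset.sup_lt_iff (omega_pos 1) |>.2 fun n _ => (hw n (d m) ih).2.2
    have hdmono : StrictMono d := by
      refine strictMono_nat_of_lt_succ fun m => ?_
      rw [hdsucc]
      exact lt_of_lt_of_le (lt_add_one _) (le_max_left _ _)
    set l := iSup d with hldef
    have hlub : IsLUB (Set.range d) l :=
      isLUB_csSup (Set.range_nonempty d) (Ordinal.bddAbove_range d)
    have hlΩ : l < ω_ 1 := lub_lt hdlt hlub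
    refine ⟨l, ?_, lt_of_lt_of_le (lt_add_one β) (hd0 ▸ hlub.1 (mem_range_self 0))⟩
    rw [Set.mem_iInter]
    intro n
    -- witnesses for T n
    set v : ℕ → Ordinal.{v} := fun m => w n (d (m + n)) with hvdef
    have hv1 : ∀ m, v m ∈ T n ∧ d (m + n) < v m ∧ v m < ω_ 1 :=
      fun m => hw n (d (m + n)) (hdlt _)
    have hv2 : ∀ m, v m ≤ d (m + n + 1) := by
      intro m
      have : w n (d (m + n)) ≤ (Finset.range (m + n + 1)).sup fun k => w k (d (m + n)) :=
        Finset.le_sup (f := fun k => w k (d (m + n))) (Finset.mem_range.2 (Nat.lt_succ_of_le (Nat.le_add_left n m)))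
      calc v m ≤ _ := this
        _ ≤ d (m + n + 1) := by rw [hdsucc]; exact le_max_right _ _
    have hvmono : Monotone v := by
      refine monotone_nat_of_le_succ fun m => ?_
      have heq : m + n + 1 = m + 1 + n := by omega
      calc v m ≤ d (m + n + 1) := hv2 m
        _ = d (m + 1 + n) := by rw [heq]
        _ ≤ v (m + 1) := (hv1 (m + 1)).2.1.le
    have hvlub : IsLUB (Set.range v) l := by
      constructor
      · rintro _ ⟨m, rfl⟩
        exact (hv2 m).trans (hlub.1 ⟨m + n + 1, rfl⟩)
      · intro u hu
        refine hlub.2 ?_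
        rintro _ ⟨k, rfl⟩
        calc d k ≤ d (k + n) := hdmono.monotone (by omega)
          _ ≤ v k := (hv1 k).2.1.le
          _ ≤ u := hu (mem_range_self k)
    exact (h n).2.2 v (fun m => (hv1 m).1) hvmono l hvlub
  · -- closedness
    intro a ha hmono l hlub
    rw [Set.mem_iInter]
    exact fun n => (h n).2.2 a (fun m => Set.mem_iInter.1 (ha m) n) hmono l hlub



/-- The dichotomy: a continuous function `F` from the ordinals into `X` (where `x` is a
cocountable copy of `Iic ω₁` in `X`) is, on some ω-club, either constant or agrees with `x`. -/
lemma dichotomy {X : Type*} [TopologicalSpace X] [T2Space X]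
    (A : Set X) (hAcc : (Aᶜ).Countable)
    (x : Ordinal.{v} → X) (hxc : Continuous x)
    (hxinj : ∀ α ≤ (ω_ 1 : Ordinal.{v}), ∀ β ≤ (ω_ 1 : Ordinal.{v}), x α = x β → α = β)
    (hxsurj : ∀ a ∈ A, ∃ β ≤ (ω_ 1 : Ordinal.{v}), x β = a)
    (F : Ordinal.{v} → X) (hFc : Continuous F) :
    ∃ S : Set Ordinal.{v}, Club S ∧
      ((∃ c, ∀ α ∈ S, F α = c) ∨ (∀ α ∈ S, F α = x α)) := by
  by_cases hcase : ∃ c, ∀ β < (ω_ 1 : Ordinal.{v}), ∃ α, β < α ∧ α < ω_ 1 ∧ F α = c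
  · -- constant on a club
    obtain ⟨c, hc⟩ := hcase
    refine ⟨{α | α < ω_ 1 ∧ F α = c}, ⟨fun α hα => hα.1, ?_, ?_⟩,
      Or.inl ⟨c, fun α hα => hα.2⟩⟩
    · intro β hβ
      obtain ⟨α, h1, h2, h3⟩ := hc β hβ
      exact ⟨α, ⟨h2, h3⟩, h1⟩
    · intro a ha hmono l hlub
      have hlΩ : l < ω_ 1 := lub_lt (fun n => (ha n).1) hlub
      have h1 : Tendsto (fun n => F (a n)) atTop (𝓝 (F l)) :=
        (hFc.tendsto l).comp (tendsto_atTop_isLUB hmono hlub)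
      have h2 : (fun n => F (a n)) = fun _ => c := funext fun n => (ha n).2
      rw [h2] at h1
      exact ⟨hlΩ, (tendsto_nhds_unique tendsto_const_nhds h1).symm⟩
  · -- identity on a club
    push_neg at hcase
    obtain ⟨bd, hbd1, hbd2⟩ : ∃ bd : X → Ordinal.{v}, (∀ c, bd c < ω_ 1) ∧
        (∀ c α, bd c < α → α < ω_ 1 → F α ≠ c) := by
      choose bd h1 h2 using hcase
      exact ⟨bd, h1, fun c α hα hα2 => by
        have := h2 c α
        tauto⟩
    -- Step a: beyond δ₀, F lands in A and avoids x ω₁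
    obtain ⟨δ₀, hδ₀, hδ₀b⟩ : ∃ δ, δ < ω_ 1 ∧ ∀ c ∈ (Aᶜ ∪ {x (ω_ 1)} : Set X), bd c ≤ δ := by
      obtain ⟨δ, hδ, hb⟩ := csup_lt (s := bd '' (Aᶜ ∪ {x (ω_ 1)}))
        ((hAcc.union (Set.countable_singleton _)).image bd)
        (by rintro β ⟨c, _, rfl⟩; exact hbd1 c)
      exact ⟨δ, hδ, fun c hc => hb _ (Set.mem_image_of_mem bd hc)⟩
    have hstepa : ∀ α, δ₀ < α → α < ω_ 1 → F α ∈ A ∧ F α ≠ x (ω_ 1) := by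
      intro α h1 h2
      constructor
      · by_contra hFA
        exact hbd2 (F α) α (lt_of_le_of_lt (hδ₀b _ (Or.inl hFA)) h1) h2 rfl
      · intro hFeq
        exact hbd2 (F α) α
          (lt_of_le_of_lt (hδ₀b _ (Or.inr (Set.mem_singleton_iff.2 hFeq))) h1) h2 rfl
    -- Step b: the index function g
    set g : Ordinal.{v} → Ordinal.{v} := fun α => sSup {β | β ≤ ω_ 1 ∧ x β = F α} with hgdef
    have hg : ∀ α, δ₀ < α → α < ω_ 1 → g α < ω_ 1 ∧ x (g α) = F α := by
      intro α h1 h2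
      obtain ⟨hFA, hFne⟩ := hstepa α h1 h2
      obtain ⟨β₀, hβ₀, hxβ₀⟩ := hxsurj _ hFA
      have hset : {β | β ≤ (ω_ 1 : Ordinal.{v}) ∧ x β = F α} = {β₀} := by
        ext β
        simp only [Set.mem_setOf_eq, Set.mem_singleton_iff]
        constructor
        · rintro ⟨hβ, hxβ⟩; exact hxinj β hβ β₀ hβ₀ (hxβ.trans hxβ₀.symm)
        · rintro rfl; exact ⟨hβ₀, hxβ₀⟩
      have hgα : g α = β₀ := by rw [hgdef]; simp only; rw [hset, csSup_singleton]
      rw [hgα]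
      refine ⟨?_, hxβ₀⟩
      rcases lt_or_eq_of_le hβ₀ with h | h
      · exact h
      · exact absurd (h ▸ hxβ₀).symm hFne
    -- Step c: η
    have hηe : ∀ β, ∃ η, β < ω_ 1 →
        (η < ω_ 1 ∧ ∀ α, δ₀ < α → α < ω_ 1 → g α ≤ β → α ≤ η) := by
      intro β
      by_cases hβ : β < (ω_ 1 : Ordinal.{v})
      · obtain ⟨η, hη, hb⟩ := csup_lt (s := (fun γ => bd (x γ)) '' Set.Iic β)
          ((countable_Iic hβ).image _) (by rintro δ ⟨γ, _, rfl⟩; exact hbd1 _)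
        refine ⟨η, fun _ => ⟨hη, fun α h1 h2 h3 => ?_⟩⟩
        obtain ⟨hglt, hgx⟩ := hg α h1 h2
        have hble : α ≤ bd (x (g α)) := by
          by_contra hcon
          push_neg at hcon
          exact hbd2 (x (g α)) α hcon h2 hgx.symm
        exact hble.trans (hb _ ⟨g α, h3, rfl⟩)
      · exact ⟨0, fun h => absurd h hβ⟩
    choose η hη using hηe
    -- Step d: G bounding g on initial segments
    have hGe : ∀ ξ, ∃ G, ξ < ω_ 1 → (G < ω_ 1 ∧ ∀ α, δ₀ < α → α ≤ ξ → g α ≤ G) := by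
      intro ξ
      by_cases hξ : ξ < (ω_ 1 : Ordinal.{v})
      · obtain ⟨G, hGlt, hb⟩ := csup_lt (s := g '' Set.Ioc δ₀ ξ)
          (((countable_Iic hξ).mono Set.Ioc_subset_Iic_self).image _)
          (by rintro δ ⟨α, hα, rfl⟩; exact (hg α hα.1 (lt_of_le_of_lt hα.2 hξ)).1)
        exact ⟨G, fun _ => ⟨hGlt, fun α h1 h2 => hb _ ⟨α, ⟨h1, h2⟩, rfl⟩⟩⟩
      · exact ⟨0, fun h => absurd h hξ⟩
    choose G hG using hGe
    -- the fixed-point club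
    refine ⟨{l | δ₀ < l ∧ l < ω_ 1 ∧ F l = x l}, ⟨fun α hα => hα.2.1, ?_, ?_⟩,
      Or.inr fun α hα => hα.2.2⟩
    · -- unbounded: iterate the closure function
      intro β₀ hβ₀
      set step : Ordinal.{v} → Ordinal.{v} := fun ξ => max (max (G ξ) (η ξ)) ξ + 1
        with hstepdef
      have hstep_gt : ∀ ξ, ξ < step ξ := fun ξ =>
        lt_of_le_of_lt (le_max_right _ _) (lt_add_one _)
      have hstep_lt : ∀ ξ, ξ < ω_ 1 → step ξ < ω_ 1 := by
        intro ξ hξ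
        have h1 : max (max (G ξ) (η ξ)) ξ < ω_ 1 :=
          max_lt (max_lt (hG ξ hξ).1 (hη ξ hξ).1) hξ
        rw [hstepdef]
        simp only
        rw [Ordinal.add_one_eq_succ]
        exact (isSuccLimit_omega 1).succ_lt h1
      set a : ℕ → Ordinal.{v} := fun n => step^[n] (max β₀ δ₀ + 1) with hadef
      have ha0 : a 0 = max β₀ δ₀ + 1 := rfl
      have hasucc : ∀ n, a (n + 1) = step (a n) := fun n =>
        Function.iterate_succ_apply' step n _
      have halt : ∀ n, a n < ω_ 1 := by
        intro n
        induction n with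
        | zero =>
          rw [ha0, Ordinal.add_one_eq_succ]
          exact (isSuccLimit_omega 1).succ_lt (max_lt hβ₀ hδ₀)
        | succ n ih => rw [hasucc]; exact hstep_lt _ ih
      have hamono : StrictMono a := strictMono_nat_of_lt_succ fun n => by
        rw [hasucc]; exact hstep_gt _
      have haδ : ∀ n, δ₀ < a n := by
        intro n
        have h1 : δ₀ < a 0 := by
          rw [ha0]; exact lt_of_le_of_lt (le_max_right β₀ δ₀) (lt_add_one _)
        exact lt_of_lt_of_le h1 (hamono.monotone (Nat.zero_le n))
      set l := iSup a with hldef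
      have hlub : IsLUB (Set.range a) l :=
        isLUB_csSup (Set.range_nonempty a) (Ordinal.bddAbove_range a)
      have hlΩ : l < ω_ 1 := lub_lt halt hlub
      have haLE : ∀ n, a n ≤ l := fun n => hlub.1 (mem_range_self n)
      set b : ℕ → Ordinal.{v} := fun n => g (a (n + 1)) with hbdef
      have hb1 : ∀ n, a n < b n := by
        intro n
        by_contra hcon
        push_neg at hcon
        have h1 := (hη (a n) (halt n)).2 (a (n + 1)) (haδ _) (halt _) hcon
        have h2 : η (a n) < a (n + 1) := by
          rw [hasucc]
          exact lt_of_le_of_lt (le_trans (le_max_right _ _) (le_max_left _ _)) (lt_add_one _)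
        exact absurd h1 (not_le.2 h2)
      have hb2 : ∀ n, b n ≤ l := by
        intro n
        have h1 : g (a (n + 1)) ≤ G (a (n + 1)) := (hG _ (halt _)).2 _ (haδ _) le_rfl
        have h2 : G (a (n + 1)) < a (n + 2) := by
          rw [hasucc (n + 1)]
          exact lt_of_le_of_lt (le_trans (le_max_left _ _) (le_max_left _ _)) (lt_add_one _)
        exact le_trans h1 (le_trans h2.le (haLE _))
      have hbtend : Tendsto b atTop (𝓝 l) := squeeze hamono.monotone hlub hb1 hb2
      have hlub' : IsLUB (Set.range fun n => a (n + 1)) l := by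
        constructor
        · rintro _ ⟨n, rfl⟩; exact haLE _
        · intro u hu
          refine hlub.2 ?_
          rintro _ ⟨n, rfl⟩
          exact le_trans (hamono.monotone (Nat.le_succ n)) (hu (mem_range_self n))
      have h1 : Tendsto (fun n => F (a (n + 1))) atTop (𝓝 (F l)) :=
        (hFc.tendsto l).comp
          (tendsto_atTop_isLUB (fun m k hmk => hamono.monotone (Nat.succ_le_succ hmk)) hlub')
      have h2 : Tendsto (fun n => x (b n)) atTop (𝓝 (x l)) := (hxc.tendsto l).comp hbtend
      have h3 : (fun n => F (a (n + 1))) = fun n => x (b n) :=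
        funext fun n => ((hg (a (n + 1)) (haδ _) (halt _)).2).symm
      rw [h3] at h1
      have hFl : F l = x l := tendsto_nhds_unique h1 h2
      have hβl : β₀ < l := by
        have h1 : β₀ < a 0 := by
          rw [ha0]; exact lt_of_le_of_lt (le_max_left β₀ δ₀) (lt_add_one _)
        exact lt_of_lt_of_le h1 (haLE 0)
      exact ⟨l, ⟨lt_of_lt_of_le (haδ 0) (haLE 0), hlΩ, hFl⟩, hβl⟩
    · -- closedness
      intro a ha hmono l hlub
      have hlΩ : l < ω_ 1 := lub_lt (fun n => (ha n).2.1) hlub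
      have hδl : δ₀ < l := lt_of_lt_of_le (ha 0).1 (hlub.1 (mem_range_self 0))
      have h1 : Tendsto (fun n => F (a n)) atTop (𝓝 (F l)) :=
        (hFc.tendsto l).comp (tendsto_atTop_isLUB hmono hlub)
      have h2 : Tendsto (fun n => x (a n)) atTop (𝓝 (x l)) :=
        (hxc.tendsto l).comp (tendsto_atTop_isLUB hmono hlub)
      have h3 : (fun n => F (a n)) = fun n => x (a n) := funext fun n => (ha n).2.2
      rw [h3] at h1
      exact ⟨hδl, hlΩ, tendsto_nhds_unique h1 h2⟩

end NoAMeanAux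

open Ordinal Topology

/-- An almost 2-mean: a symmetric binary operation which is idempotent off a
countable set. -/
def IsTwoAMean {X : Type*} (μ : X → X → X) : Prop :=
  (∀ x y, μ x y = μ y x) ∧ {x : X | μ x x ≠ x}.Countable

theorem no_sep_cts_two_amean (X : Type*) [TopologicalSpace X] [T2Space X]
    [TopologicalSpace.SeparableSpace X]
    (A : Set X) (hAcc : (Aᶜ).Countable)
    (hA : Nonempty (A ≃ₜ (Set.Iic (ω_ 1) : Set Ordinal))) :
    ¬ ∃ μ : X → X → X, SepCts μ ∧ IsTwoAMean μ := by
  classical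
  rintro ⟨μ, hsep, hsym, hN⟩
  obtain ⟨e⟩ := hA
  set N := {z : X | μ z z ≠ z} with hNdef
  -- the copy of [0, ω₁] inside X
  set x : Ordinal → X :=
    fun α => ((e.symm ⟨min α (ω_ 1), Set.mem_Iic.2 (min_le_right _ _)⟩ : A) : X) with hxdef
  have hxcont : Continuous x := by
    refine continuous_subtype_val.comp (e.symm.continuous.comp ?_)
    exact (continuous_id.min continuous_const).subtype_mk _
  have hxeq : ∀ {α : Ordinal} (hα : α ≤ ω_ 1),
      x α = ((e.symm ⟨α, Set.mem_Iic.2 hα⟩ : A) : X) := by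
    intro α hα
    simp only [hxdef]
    congr 2
    exact Subtype.ext (min_eq_left hα)
  have hxA : ∀ α, x α ∈ A := fun α => (e.symm _).2
  have hxinj : ∀ α ≤ (ω_ 1 : Ordinal), ∀ β ≤ (ω_ 1 : Ordinal), x α = x β → α = β := by
    intro α hα β hβ hxy
    rw [hxeq hα, hxeq hβ] at hxy
    have h1 := e.symm.injective (Subtype.coe_injective hxy)
    simpa using congrArg Subtype.val h1
  have hxsurj : ∀ a ∈ A, ∃ β ≤ (ω_ 1 : Ordinal), x β = a := by
    intro a ha
    refine ⟨(e ⟨a, ha⟩ : Set.Iic (ω_ 1 : Ordinal)).1, Set.mem_Iic.1 (e ⟨a, ha⟩).2, ?_⟩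
    rw [hxeq (Set.mem_Iic.1 (e ⟨a, ha⟩).2)]
    simp
  -- countable dense set
  obtain ⟨D, hDc, hDd⟩ := TopologicalSpace.exists_countable_dense X
  have hXne : Nonempty X := ⟨x 0⟩
  have hDne : D.Nonempty := hDd.nonempty
  -- dichotomy for each point of X
  have dich : ∀ y : X, ∃ S : Set Ordinal, NoAMeanAux.Club S ∧
      ((∃ c, ∀ α ∈ S, μ y (x α) = c) ∨ (∀ α ∈ S, μ y (x α) = x α)) := by
    intro y
    exact NoAMeanAux.dichotomy A hAcc x hxcont hxinj hxsurj
      (fun α => μ y (x α)) ((hsep y).1.comp hxcont)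
  choose S hSclub hScase using dich
  -- enumerate D and intersect the clubs
  obtain ⟨q, hq⟩ := hDc.exists_eq_range hDne
  set E := ⋂ n, S (q n) with hEdef
  have hEclub : NoAMeanAux.Club E := NoAMeanAux.club_iInter _ fun n => hSclub (q n)
  have hEsub : ∀ d ∈ D, E ⊆ S d := by
    intro d hd
    rw [hq] at hd
    obtain ⟨n, rfl⟩ := hd
    exact Set.iInter_subset _ n
  -- bound the indices of the non-idempotency set N
  obtain ⟨δN, hδN, hδNb⟩ : ∃ δ, δ < (ω_ 1 : Ordinal) ∧
      ∀ α, α < ω_ 1 → x α ∈ N → α ≤ δ := by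
    have hJ : ((fun a : Set.Iic (ω_ 1 : Ordinal) => ((e.symm a : A) : X)) ⁻¹' N).Countable := by
      refine hN.preimage ?_
      intro a b hab
      exact e.symm.injective (Subtype.coe_injective hab)
    have hJ2 : (Subtype.val '' ((fun a : Set.Iic (ω_ 1 : Ordinal) =>
        ((e.symm a : A) : X)) ⁻¹' N)).Countable := hJ.image _
    obtain ⟨δ, hδ, hb⟩ := NoAMeanAux.csup_lt (s := Subtype.val ''
        ((fun a : Set.Iic (ω_ 1 : Ordinal) => ((e.symm a : A) : X)) ⁻¹' N) ∩ Set.Iio (ω_ 1))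
      (hJ2.mono Set.inter_subset_left)
      (fun β hβ => hβ.2)
    refine ⟨δ, hδ, fun α hα hαN => ?_⟩
    refine hb α ⟨⟨⟨α, Set.mem_Iic.2 hα.le⟩, ?_, rfl⟩, hα⟩
    show ((e.symm ⟨α, Set.mem_Iic.2 hα.le⟩ : A) : X) ∈ N
    rwa [← hxeq hα.le]
  -- idempotency off the bound
  have hid : ∀ α, δN < α → α < ω_ 1 → μ (x α) (x α) = x α := by
    intro α h1 h2
    by_contra hcon
    exact absurd (hδNb α h2 hcon) (not_le.2 h1)
  -- split D according to the dichotomy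
  set D₀ := {d ∈ D | ∃ c, ∀ α ∈ S d, μ d (x α) = c} with hD₀def
  set D₁ := D \ D₀ with hD₁def
  have hDsplit : D = D₀ ∪ D₁ := by
    rw [hD₁def]
    exact (Set.union_diff_cancel (fun d hd => hd.1)).symm
  have hcover : (Set.univ : Set X) = closure D₀ ∪ closure D₁ := by
    rw [← closure_union, ← hDsplit]
    exact (hDd.closure_eq).symm
  have hfix : ∀ d ∈ D₁, ∀ α ∈ S d, μ d (x α) = x α := by
    intro d hd
    rcases hScase d with h | h
    · exact absurd ⟨hd.1, h⟩ hd.2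
    · exact h
  -- the key rigidity statement
  have main : ∀ κ ν, κ ∈ E → ν ∈ E → δN < κ → δN < ν → κ < ν →
      ¬(x κ ∈ closure D₀ ∧ x ν ∈ closure D₀) ∧
      ¬(x κ ∈ closure D₁ ∧ x ν ∈ closure D₁) := by
    intro κ ν hκE hνE hκδ hνδ hκν
    have hκΩ : κ < ω_ 1 := hEclub.1 κ hκE
    have hνΩ : ν < ω_ 1 := hEclub.1 ν hνE
    have hne : x κ ≠ x ν := fun h => absurd (hxinj κ hκΩ.le ν hνΩ.le h) hκν.ne
    constructor
    · rintro ⟨h0κ, h0ν⟩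
      have hagree : ∀ d ∈ D₀, μ d (x κ) = μ d (x ν) := by
        rintro d ⟨hdD, c, hc⟩
        rw [hc κ (hEsub d hdD hκE), hc ν (hEsub d hdD hνE)]
      have hK : closure D₀ ⊆ {z : X | μ z (x κ) = μ z (x ν)} := by
        refine closure_minimal hagree (isClosed_eq (hsep (x κ)).2 (hsep (x ν)).2)
      have e1 : x κ = μ (x κ) (x ν) := by
        have := hK h0κ
        rw [Set.mem_setOf_eq, hid κ hκδ hκΩ] at this
        exact this
      have e2 : μ (x ν) (x κ) = x ν := by
        have := hK h0ν
        rw [Set.mem_setOf_eq, hid ν hνδ hνΩ] at this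
        exact this.symm ▸ this
      exact hne (by rw [e1, hsym, e2])
    · rintro ⟨h1κ, h1ν⟩
      have hKκ : closure D₁ ⊆ {z : X | μ z (x κ) = x κ} := by
        refine closure_minimal (fun d hd => hfix d hd κ (hEsub d hd.1 hκE))
          (isClosed_eq (hsep (x κ)).2 continuous_const)
      have hKν : closure D₁ ⊆ {z : X | μ z (x ν) = x ν} := by
        refine closure_minimal (fun d hd => hfix d hd ν (hEsub d hd.1 hνE))
          (isClosed_eq (hsep (x ν)).2 continuous_const)
      have e1 : μ (x ν) (x κ) = x κ := hKκ h1ν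
      have e2 : μ (x κ) (x ν) = x ν := hKν h1κ
      exact hne (by rw [← e2, hsym, e1])
  -- pick three points of E above δN
  obtain ⟨l₁, hl₁E, hl₁⟩ := hEclub.2.1 δN hδN
  obtain ⟨l₂, hl₂E, hl₂⟩ := hEclub.2.1 l₁ (hEclub.1 _ hl₁E)
  obtain ⟨l₃, hl₃E, hl₃⟩ := hEclub.2.1 l₂ (hEclub.1 _ hl₂E)
  have hδ2 : δN < l₂ := hl₁.trans hl₂
  have hδ3 : δN < l₃ := hδ2.trans hl₃
  have m1 : x l₁ ∈ closure D₀ ∪ closure D₁ := hcover ▸ Set.mem_univ _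
  have m2 : x l₂ ∈ closure D₀ ∪ closure D₁ := hcover ▸ Set.mem_univ _
  have m3 : x l₃ ∈ closure D₀ ∪ closure D₁ := hcover ▸ Set.mem_univ _
  rcases m1 with m1 | m1 <;> rcases m2 with m2 | m2 <;> rcases m3 with m3 | m3
  · exact (main l₁ l₂ hl₁E hl₂E hl₁ hδ2 hl₂).1 ⟨m1, m2⟩
  · exact (main l₁ l₂ hl₁E hl₂E hl₁ hδ2 hl₂).1 ⟨m1, m2⟩
  · exact (main l₁ l₃ hl₁E hl₃E hl₁ hδ3 (hl₂.trans hl₃)).1 ⟨m1, m3⟩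
  · exact (main l₂ l₃ hl₂E hl₃E hδ2 hδ3 hl₃).2 ⟨m2, m3⟩
  · exact (main l₂ l₃ hl₂E hl₃E hδ2 hδ3 hl₃).1 ⟨m2, m3⟩
  · exact (main l₁ l₃ hl₁E hl₃E hl₁ hδ3 (hl₂.trans hl₃)).2 ⟨m1, m3⟩
  · exact (main l₁ l₂ hl₁E hl₂E hl₁ hδ2 hl₂).2 ⟨m1, m2⟩
  · exact (main l₁ l₂ hl₁E hl₂E hl₁ hδ2 hl₂).2 ⟨m1, m2⟩
end
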